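/- arXiv:1711.00301 — 3 statements merged into one kernel-verified Lean document; each statement's English description precedes it below -/
import Mathlib

section
/- Let n be a positive integer. For every fixed w ∈ U and every R > 0, the Lebesgue measure of the set {z ∈ U : |ρ(z,w)| < R} is at most (2^{n+1} π^n / (n−1)!) · R^{n+1}. -/
open MeasureTheory Complex Real ENNReal

noncomputable section

/-- We model `ℂ^n` (with `n ≥ 1`) as `ℂ^{n-1} × ℂ`, writing `z = (z', z_n)`. -/
abbrev SiegelSpace (n : ℕ) := (Fin (n - 1) → ℂ) × ℂ

/-- The Siegel upper half-space `U = {z : Im z_n > |z'|²}`. -/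
def siegelDomain (n : ℕ) : Set (SiegelSpace n) :=
  {z | ∑ k, ‖z.1 k‖ ^ 2 < z.2.im}

/-- `ρ(z,w) = (i/2)(conj w_n − z_n) − ⟨z', w'⟩`. -/
def siegelRho (n : ℕ) (z w : SiegelSpace n) : ℂ :=
  Complex.I / 2 * ((starRingEnd ℂ) w.2 - z.2) - ∑ k, z.1 k * (starRingEnd ℂ) (w.1 k)

/-- `ρ(w) = ρ(w,w) = Im w_n − |w'|²`, as a real number. -/
def siegelRhoSelf (n : ℕ) (w : SiegelSpace n) : ℝ :=
  w.2.im - ∑ k, ‖w.1 k‖ ^ 2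

/-- Lebesgue measure restricted to the Siegel upper half-space. -/
def siegelMeasure (n : ℕ) : Measure (SiegelSpace n) := volume.restrict (siegelDomain n)

/-- The Bergman-type operator `T_α f(z) = ∫_U f(w) ρ(z,w)^{-α} dV(w)`. -/
def Talpha (n : ℕ) (α : ℝ) (f : SiegelSpace n → ℂ) (z : SiegelSpace n) : ℂ :=
  ∫ w in siegelDomain n, f w / siegelRho n z w ^ (α : ℂ)

/-- `T_α` is bounded from `L^p(U)` to `L^q(U)`: there is `C > 0` such that for every
`f ∈ L^p(U)` the defining integral converges absolutely for a.e. `z ∈ U` and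
`‖T_α f‖_q ≤ C ‖f‖_p`. -/
def TalphaBounded (n : ℕ) (α : ℝ) (p q : ℝ≥0∞) : Prop :=
  ∃ C : ℝ, 0 < C ∧ ∀ f : SiegelSpace n → ℂ, MemLp f p (siegelMeasure n) →
    (∀ᵐ z ∂(siegelMeasure n),
      IntegrableOn (fun w => f w / siegelRho n z w ^ (α : ℂ)) (siegelDomain n)) ∧
    eLpNorm (Talpha n α f) q (siegelMeasure n) ≤
      ENNReal.ofReal C * eLpNorm f p (siegelMeasure n)

/-- The operator `S_α f(z) = ∫_U f(w) |ρ(z,w)|^{-α} dV(w)`. -/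
def Salpha (n : ℕ) (α : ℝ) (f : SiegelSpace n → ℂ) (z : SiegelSpace n) : ℂ :=
  ∫ w in siegelDomain n, f w / ((‖siegelRho n z w‖ ^ α : ℝ) : ℂ)

/-- `S_α` is bounded from `L^p(U)` to `L^q(U)`. -/
def SalphaBounded (n : ℕ) (α : ℝ) (p q : ℝ≥0∞) : Prop :=
  ∃ C : ℝ, 0 < C ∧ ∀ f : SiegelSpace n → ℂ, MemLp f p (siegelMeasure n) →
    (∀ᵐ z ∂(siegelMeasure n),
      IntegrableOn (fun w => f w / ((‖siegelRho n z w‖ ^ α : ℝ) : ℂ))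
        (siegelDomain n)) ∧
    eLpNorm (Salpha n α f) q (siegelMeasure n) ≤
      ENNReal.ofReal C * eLpNorm f p (siegelMeasure n)

/-- The point `𝐢 = (0', i) ∈ U`. -/
def siegelPt (n : ℕ) : SiegelSpace n := (0, Complex.I)

/-- The dilation `t ∘ z = (t z', t² z_n)`. -/
def dilate (n : ℕ) (t : ℝ) (z : SiegelSpace n) : SiegelSpace n :=
  (fun k => t * z.1 k, t ^ 2 * z.2)

/-- The weak-`L^r` quasinorm `‖f‖_{L^{r,∞}(U)} = sup_{λ>0} λ |{z ∈ U : |f z| > λ}|^{1/r}`. -/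
def weakNorm (n : ℕ) (r : ℝ) (f : SiegelSpace n → ℂ) : ℝ≥0∞ :=
  ⨆ (lam : ℝ) (_ : 0 < lam), ENNReal.ofReal lam *
    volume {z | z ∈ siegelDomain n ∧ lam < ‖f z‖} ^ (1 / r)

/-- The affine self-map of `U` associated to the Heisenberg group element `[ζ, t]`:
`h(z', z_n) = (z' + ζ, z_n + t + 2i⟨z', ζ⟩ + i|ζ|²)`. -/
def heis (n : ℕ) (ζ : Fin (n - 1) → ℂ) (t : ℝ) (z : SiegelSpace n) : SiegelSpace n :=
  (z.1 + ζ,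
    z.2 + t + 2 * Complex.I * ∑ k, z.1 k * (starRingEnd ℂ) (ζ k)
      + Complex.I * ((∑ k, ‖ζ k‖ ^ 2 : ℝ) : ℂ))

open Pointwise in
lemma volume_complex_ball_aux (m : ℕ) (c : Fin m → ℂ) {r : ℝ} (hr : 0 < r) :
    volume {x : Fin m → ℂ | ∑ k, ‖x k - c k‖ ^ 2 < r} =
      ENNReal.ofReal (r ^ m * π ^ m / m.factorial) := by
  have hsq : Real.sqrt r > 0 := Real.sqrt_pos.mpr hr
  have h1 : {x : Fin m → ℂ | ∑ k, ‖x k - c k‖ ^ 2 < r}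
      = (fun x => x + (-c)) ⁻¹' {x : Fin m → ℂ | ∑ k, ‖x k‖ ^ 2 < r} := by
    ext x; simp [sub_eq_add_neg]
  rw [h1, measure_preimage_add_right]
  have hs : {x : Fin m → ℂ | ∑ k, ‖x k‖ ^ 2 < r}
      = Real.sqrt r • {x : Fin m → ℂ | ∑ k, ‖x k‖ ^ (2 : ℝ) < 1} := by
    ext x
    rw [Set.mem_smul_set_iff_inv_smul_mem₀ hsq.ne']
    simp only [Set.mem_setOf_eq, Pi.smul_apply, norm_smul, norm_inv, Real.norm_eq_abs,
      abs_of_pos hsq]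
    simp_rw [show (2:ℝ) = ((2:ℕ):ℝ) by norm_num, Real.rpow_natCast, mul_pow, ← Finset.mul_sum,
      inv_pow, Real.sq_sqrt hr.le, inv_mul_lt_iff₀ hr, mul_one]
  rw [hs, Measure.addHaar_smul_of_nonneg volume hsq.le,
    Complex.volume_sum_rpow_lt_one (Fin m) one_le_two]
  have hfin : Module.finrank ℝ (Fin m → ℂ) = 2 * m := by
    rw [Module.finrank_pi_fintype ℝ]
    simp [Complex.finrank_real_complex, mul_comm]
  have hg1 : Real.Gamma (2 / 2 + 1) = 1 := by
    rw [show (2:ℝ) / 2 + 1 = (1:ℕ) + 1 by norm_num]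
    have := Real.Gamma_nat_eq_factorial 1
    simpa using this
  have hg2 : Real.Gamma (2 * (Fintype.card (Fin m)) / 2 + 1) = m.factorial := by
    rw [show (2 * (Fintype.card (Fin m) : ℝ) / 2 + 1) = (m : ℕ) + 1 by
      rw [Fintype.card_fin]; ring]
    exact Real.Gamma_nat_eq_factorial m
  rw [hg1, hg2, hfin, pow_mul, Real.sq_sqrt hr.le,
    ← ENNReal.ofReal_mul (by positivity)]
  congr 1
  rw [Fintype.card_fin]
  ring

lemma volume_complex_rect_aux (a₁ a₂ b₁ b₂ : ℝ) :
    volume {z : ℂ | z.re ∈ Set.Ioo a₁ a₂ ∧ z.im ∈ Set.Ioo b₁ b₂} =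
      ENNReal.ofReal (a₂ - a₁) * ENNReal.ofReal (b₂ - b₁) := by
  have h : {z : ℂ | z.re ∈ Set.Ioo a₁ a₂ ∧ z.im ∈ Set.Ioo b₁ b₂} =
      Complex.measurableEquivRealProd ⁻¹' (Set.Ioo a₁ a₂ ×ˢ Set.Ioo b₁ b₂) := by
    ext z
    simp [Complex.measurableEquivRealProd, Complex.equivRealProd]
  rw [h, Complex.volume_preserving_equiv_real_prod.measure_preimage
    (measurableSet_Ioo.prod measurableSet_Ioo).nullMeasurableSet,
    show (volume : Measure (ℝ × ℝ)) = (volume : Measure ℝ).prod volume from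
      Measure.volume_eq_prod _ _,
    Measure.prod_prod, Real.volume_Ioo, Real.volume_Ioo]

/-- For every `w ∈ U` and `R > 0`, `|{z ∈ U : |ρ(z,w)| < R}| ≤ (2^{n+1} π^n / (n−1)!) R^{n+1}`. -/
theorem volume_rho_ball_le (n : ℕ) (hn : 0 < n) (w : SiegelSpace n)
    (hw : w ∈ siegelDomain n) (R : ℝ) (hR : 0 < R) :
    volume {z | z ∈ siegelDomain n ∧ ‖siegelRho n z w‖ < R} ≤
      ENNReal.ofReal (2 ^ (n + 1) * π ^ n / (Nat.factorial (n - 1) : ℝ) * R ^ (n + 1)) := by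
  set B : Set (Fin (n - 1) → ℂ) := {x | ∑ k, ‖x k - w.1 k‖ ^ 2 < 2 * R} with hB
  set A : (Fin (n - 1) → ℂ) → ℝ :=
    fun x => w.2.re - 2 * (∑ k, x k * (starRingEnd ℂ) (w.1 k)).im with hA
  set b : (Fin (n - 1) → ℂ) → ℝ := fun x => ∑ k, ‖x k‖ ^ 2 with hb
  set T : Set (SiegelSpace n) := {z | z.1 ∈ B ∧
      z.2.re ∈ Set.Ioo (A z.1 - 2 * R) (A z.1 + 2 * R) ∧
      z.2.im ∈ Set.Ioo (b z.1) (b z.1 + 2 * R)} with hT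
  have hsub : {z | z ∈ siegelDomain n ∧ ‖siegelRho n z w‖ < R} ⊆ T := by
    rintro z ⟨hz1, hz2⟩
    have hz1' : ∑ k, ‖z.1 k‖ ^ 2 < z.2.im := hz1
    have hw' : ∑ k, ‖w.1 k‖ ^ 2 < w.2.im := hw
    have hre : (siegelRho n z w).re
        = (w.2.im + z.2.im) / 2 - (∑ k, z.1 k * (starRingEnd ℂ) (w.1 k)).re := by
      simp [siegelRho, Complex.div_re, Complex.re_sum]
      ring
    have him : (siegelRho n z w).im
        = (w.2.re - z.2.re) / 2 - (∑ k, z.1 k * (starRingEnd ℂ) (w.1 k)).im := by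
      simp [siegelRho, Complex.div_im, Complex.im_sum]
      ring
    have h1 : (siegelRho n z w).re < R := lt_of_le_of_lt (Complex.re_le_norm _) hz2
    have h2 : |(siegelRho n z w).im| < R :=
      lt_of_le_of_lt (Complex.abs_im_le_norm _) hz2
    rw [abs_lt] at h2
    obtain ⟨h2a, h2b⟩ := h2
    have hsum : ∑ k, ‖z.1 k - w.1 k‖ ^ 2
        = (∑ k, ‖z.1 k‖ ^ 2) + (∑ k, ‖w.1 k‖ ^ 2)
          - 2 * (∑ k, z.1 k * (starRingEnd ℂ) (w.1 k)).re := by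
      simp_rw [Complex.sq_norm, Complex.normSq_sub]
      rw [Complex.re_sum, Finset.mul_sum, Finset.sum_sub_distrib, Finset.sum_add_distrib]
    have hnn : (0:ℝ) ≤ ∑ k, ‖z.1 k - w.1 k‖ ^ 2 := by positivity
    refine ⟨?_, ⟨?_, ?_⟩, hz1', ?_⟩
    · show ∑ k, ‖z.1 k - w.1 k‖ ^ 2 < 2 * R
      linarith
    · show A z.1 - 2 * R < z.2.re
      simp only [hA]
      linarith
    · show z.2.re < A z.1 + 2 * R
      simp only [hA]
      linarith
    · show z.2.im < b z.1 + 2 * R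
      simp only [hb]
      linarith
  refine le_trans (measure_mono hsub) ?_
  have hcB : Continuous fun x : Fin (n - 1) → ℂ => ∑ k, ‖x k - w.1 k‖ ^ 2 :=
    continuous_finset_sum _ fun k _ =>
      (continuous_norm.comp ((continuous_apply k).sub continuous_const)).pow 2
  have hBmeas : MeasurableSet B := measurableSet_lt hcB.measurable measurable_const
  have hTmeas : MeasurableSet T := by
    have hc1 : Continuous fun z : SiegelSpace n => ∑ k, ‖z.1 k - w.1 k‖ ^ 2 :=
      hcB.comp continuous_fst
    have hc2 : Continuous fun z : SiegelSpace n => A z.1 := by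
      simp only [hA]
      exact continuous_const.sub (continuous_const.mul (Complex.continuous_im.comp
        (continuous_finset_sum _ fun k _ =>
          (((continuous_apply k).comp continuous_fst).mul continuous_const))))
    have hc3 : Continuous fun z : SiegelSpace n => b z.1 := by
      simp only [hb]
      exact continuous_finset_sum _ fun k _ =>
        (continuous_norm.comp ((continuous_apply k).comp continuous_fst)).pow 2
    have hc4 : Continuous fun z : SiegelSpace n => z.2.re :=
      Complex.continuous_re.comp continuous_snd
    have hc5 : Continuous fun z : SiegelSpace n => z.2.im :=
      Complex.continuous_im.comp continuous_snd
    rw [hT]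
    simp only [Set.mem_Ioo, Set.mem_setOf_eq, Set.setOf_and]
    refine MeasurableSet.inter ?_ (MeasurableSet.inter
      (MeasurableSet.inter ?_ ?_) (MeasurableSet.inter ?_ ?_))
    · exact measurableSet_lt hc1.measurable measurable_const
    · exact measurableSet_lt (hc2.sub continuous_const).measurable hc4.measurable
    · exact measurableSet_lt hc4.measurable (hc2.add continuous_const).measurable
    · exact measurableSet_lt hc3.measurable hc5.measurable
    · exact measurableSet_lt hc5.measurable (hc3.add continuous_const).measurable
  rw [show (volume : Measure (SiegelSpace n))
      = ((volume : Measure (Fin (n - 1) → ℂ)).prod (volume : Measure ℂ)) from rfl,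
    Measure.prod_apply hTmeas]
  have hslice : ∀ x : Fin (n - 1) → ℂ, volume (Prod.mk x ⁻¹' T)
      = B.indicator (fun _ => ENNReal.ofReal (4 * R) * ENNReal.ofReal (2 * R)) x := by
    intro x
    by_cases hx : x ∈ B
    · rw [Set.indicator_of_mem hx]
      have hpre : Prod.mk x ⁻¹' T = {zn : ℂ | zn.re ∈ Set.Ioo (A x - 2 * R) (A x + 2 * R)
          ∧ zn.im ∈ Set.Ioo (b x) (b x + 2 * R)} := by
        ext zn
        simp only [hT, Set.mem_preimage, Set.mem_setOf_eq, Set.mem_Ioo]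
        exact ⟨fun h => h.2, fun h => ⟨hx, h⟩⟩
      rw [hpre, volume_complex_rect_aux]
      congr 2 <;> ring
    · rw [Set.indicator_of_notMem hx]
      have hpre : Prod.mk x ⁻¹' T = ∅ := by
        rw [Set.eq_empty_iff_forall_notMem]
        intro zn hzn
        exact hx hzn.1
      simp [hpre]
  simp_rw [hslice]
  rw [lintegral_indicator hBmeas, setLIntegral_const, hB,
    volume_complex_ball_aux (n - 1) w.1 (by positivity : (0:ℝ) < 2 * R),
    ← ENNReal.ofReal_mul (by positivity), ← ENNReal.ofReal_mul (by positivity)]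
  apply ENNReal.ofReal_le_ofReal
  obtain ⟨m, rfl⟩ : ∃ m, n = m + 1 := ⟨n - 1, (Nat.succ_pred_eq_of_pos hn).symm⟩
  simp only [Nat.add_sub_cancel]
  have h2pi : (2:ℝ) ≤ π := by nlinarith [Real.pi_gt_three]
  have hX : (0:ℝ) ≤ 2 ^ (m + 2) * π ^ m / (Nat.factorial m : ℝ) * R ^ (m + 2) := by positivity
  calc 4 * R * (2 * R) * ((2 * R) ^ m * π ^ m / (Nat.factorial m : ℝ))
      = 2 * (2 ^ (m + 2) * π ^ m / (Nat.factorial m : ℝ) * R ^ (m + 2)) := by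
        rw [mul_pow]; ring
    _ ≤ π * (2 ^ (m + 2) * π ^ m / (Nat.factorial m : ℝ) * R ^ (m + 2)) :=
        mul_le_mul_of_nonneg_right h2pi hX
    _ = 2 ^ (m + 1 + 1) * π ^ (m + 1) / (Nat.factorial m : ℝ) * R ^ (m + 1 + 1) := by
        ring
end
end

section
/- Let n be a positive integer, 1 ≤ p < ∞, and let N be a positive integer with pN > n+1. Let i = (0', i) ∈ U and f_N(z) = ρ(z, i)^{−N}. Then f_N ∈ L^p(U) and ‖f_N‖_{L^p(U)}^p = 4π^n Γ(pN − n − 1) / Γ(pN/2)². -/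
open MeasureTheory Complex Real ENNReal

noncomputable section

section SiegelHelpers
open Set

lemma gamma_integrand_integrableOn {a r : ℝ} (ha : 0 < a) (hr : 0 < r) :
    IntegrableOn (fun t : ℝ => t ^ (a - 1) * Real.exp (-(r * t))) (Ioi 0) := by
  have h := integrableOn_rpow_mul_exp_neg_mul_rpow (p := 1) (s := a - 1) (b := r)
    (by linarith) one_pos hr
  refine h.congr_fun (fun x _ => ?_) measurableSet_Ioi
  dsimp only
  rw [Real.rpow_one, neg_mul]

lemma lint_gamma {a r : ℝ} (ha : 0 < a) (hr : 0 < r) :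
    ∫⁻ t in Ioi (0:ℝ), ENNReal.ofReal (t ^ (a - 1) * Real.exp (-(r * t)))
      = ENNReal.ofReal ((1 / r) ^ a * Real.Gamma a) := by
  rw [← ofReal_integral_eq_lintegral_ofReal (gamma_integrand_integrableOn ha hr) ?_,
    integral_rpow_mul_exp_neg_mul_Ioi ha hr]
  filter_upwards [ae_restrict_mem measurableSet_Ioi] with t ht
  exact mul_nonneg (Real.rpow_nonneg (le_of_lt ht) _) (Real.exp_pos _).le

lemma lint_rpow_neg_eq {S : Set ℝ} (hS : MeasurableSet S) {g r : ℝ → ℝ} {a : ℝ}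
    (hg : Measurable g) (hr : Measurable r)
    (hg0 : ∀ x ∈ S, 0 ≤ g x) (hr0 : ∀ x ∈ S, 0 < r x) (ha : 0 < a) :
    ∫⁻ x in S, ENNReal.ofReal (g x * r x ^ (-a)) =
      (ENNReal.ofReal (Real.Gamma a))⁻¹ *
        ∫⁻ t in Ioi (0:ℝ), ∫⁻ x in S,
          ENNReal.ofReal (g x * (t ^ (a - 1) * Real.exp (-(r x * t)))) := by
  have hΓ : 0 < Real.Gamma a := Real.Gamma_pos_of_pos ha
  have hΓ0 : ENNReal.ofReal (Real.Gamma a) ≠ 0 := by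
    simp only [ne_eq, ENNReal.ofReal_eq_zero, not_le]; exact hΓ
  have key : ∀ x ∈ S, ENNReal.ofReal (g x * r x ^ (-a)) =
      (ENNReal.ofReal (Real.Gamma a))⁻¹ *
        ∫⁻ t in Ioi (0:ℝ), ENNReal.ofReal (g x * (t ^ (a - 1) * Real.exp (-(r x * t)))) := by
    intro x hx
    have hrx := hr0 x hx
    have h1 : ∫⁻ t in Ioi (0:ℝ), ENNReal.ofReal (g x * (t ^ (a - 1) * Real.exp (-(r x * t))))
        = ENNReal.ofReal (g x) * ENNReal.ofReal ((1 / r x) ^ a * Real.Gamma a) := by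
      simp_rw [ENNReal.ofReal_mul (hg0 x hx)]
      rw [lintegral_const_mul' _ _ ENNReal.ofReal_ne_top, lint_gamma ha hrx]
    rw [h1]
    have h2 : (1 / r x : ℝ) ^ a = r x ^ (-a) := by
      rw [one_div, Real.inv_rpow hrx.le, ← Real.rpow_neg hrx.le]
    rw [h2, ENNReal.ofReal_mul (by positivity : (0:ℝ) ≤ r x ^ (-a))]
    rw [show (ENNReal.ofReal (Real.Gamma a))⁻¹ * (ENNReal.ofReal (g x) *
          (ENNReal.ofReal (r x ^ (-a)) * ENNReal.ofReal (Real.Gamma a)))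
        = ((ENNReal.ofReal (Real.Gamma a))⁻¹ * ENNReal.ofReal (Real.Gamma a)) *
          (ENNReal.ofReal (g x) * ENNReal.ofReal (r x ^ (-a))) by ring,
      ENNReal.inv_mul_cancel hΓ0 ENNReal.ofReal_ne_top, one_mul,
      ← ENNReal.ofReal_mul (hg0 x hx)]
  have hm : Measurable fun p : ℝ × ℝ =>
      ENNReal.ofReal (g p.1 * (p.2 ^ (a - 1) * Real.exp (-(r p.1 * p.2)))) := by
    apply ENNReal.measurable_ofReal.comp
    exact (hg.comp measurable_fst).mul ((measurable_snd.pow measurable_const).mul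
      (((hr.comp measurable_fst).mul measurable_snd).neg.exp))
  calc ∫⁻ x in S, ENNReal.ofReal (g x * r x ^ (-a))
      = ∫⁻ x in S, (ENNReal.ofReal (Real.Gamma a))⁻¹ *
          ∫⁻ t in Ioi (0:ℝ), ENNReal.ofReal (g x * (t ^ (a - 1) * Real.exp (-(r x * t)))) :=
        setLIntegral_congr_fun hS key
    _ = (ENNReal.ofReal (Real.Gamma a))⁻¹ * ∫⁻ x in S, ∫⁻ t in Ioi (0:ℝ),
          ENNReal.ofReal (g x * (t ^ (a - 1) * Real.exp (-(r x * t)))) :=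
        lintegral_const_mul' _ _ (ENNReal.inv_ne_top.mpr hΓ0)
    _ = (ENNReal.ofReal (Real.Gamma a))⁻¹ * ∫⁻ t in Ioi (0:ℝ), ∫⁻ x in S,
          ENNReal.ofReal (g x * (t ^ (a - 1) * Real.exp (-(r x * t)))) := by
        rw [lintegral_lintegral_swap hm.aemeasurable]

lemma ofReal_inv_gamma_mul {c b : ℝ} (hb : 0 < b) :
    (ENNReal.ofReal b)⁻¹ * ENNReal.ofReal c = ENNReal.ofReal (c / b) := by
  rw [ENNReal.ofReal_div_of_pos hb, div_eq_mul_inv, mul_comm]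

lemma lint_LB {a s : ℝ} (ha : 0 < a) (hs : 1 < s) :
    ∫⁻ x : ℝ, ENNReal.ofReal ((x ^ 2 + a ^ 2) ^ (-(s / 2))) =
      ENNReal.ofReal (a ^ (1 - s) * (Real.sqrt π * Real.Gamma ((s - 1) / 2) / Real.Gamma (s / 2))) := by
  have hσ : 0 < s / 2 := by linarith
  have hσ' : 0 < s / 2 - 1 / 2 := by linarith
  have h0 : ∫⁻ x : ℝ, ENNReal.ofReal ((x ^ 2 + a ^ 2) ^ (-(s / 2)))
      = ∫⁻ x in (univ : Set ℝ), ENNReal.ofReal ((1 : ℝ) * (x ^ 2 + a ^ 2) ^ (-(s / 2))) := by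
    rw [Measure.restrict_univ]; simp_rw [one_mul]
  rw [h0, lint_rpow_neg_eq (g := fun _ => (1:ℝ)) (r := fun x => x ^ 2 + a ^ 2)
    MeasurableSet.univ measurable_const (by fun_prop)
    (fun _ _ => zero_le_one) (fun x _ => by positivity) hσ]
  have inner : ∀ t ∈ Ioi (0:ℝ),
      (∫⁻ x in (univ : Set ℝ),
        ENNReal.ofReal ((1:ℝ) * (t ^ (s / 2 - 1) * Real.exp (-((x ^ 2 + a ^ 2) * t)))))
      = ENNReal.ofReal (Real.sqrt π) *
          ENNReal.ofReal (t ^ (s / 2 - 1 / 2 - 1) * Real.exp (-(a ^ 2 * t))) := by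
    intro t ht
    have ht' : (0:ℝ) < t := ht
    rw [Measure.restrict_univ]
    have step1 : ∀ x : ℝ, ENNReal.ofReal ((1:ℝ) * (t ^ (s / 2 - 1) * Real.exp (-((x ^ 2 + a ^ 2) * t))))
        = ENNReal.ofReal (t ^ (s / 2 - 1) * Real.exp (-(a ^ 2 * t))) *
            ENNReal.ofReal (Real.exp (-t * x ^ 2)) := by
      intro x
      rw [← ENNReal.ofReal_mul (by positivity)]
      congr 1
      rw [one_mul, show -((x ^ 2 + a ^ 2) * t) = -(a ^ 2 * t) + -t * x ^ 2 by ring, Real.exp_add]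
      ring
    simp_rw [step1]
    rw [lintegral_const_mul' _ _ ENNReal.ofReal_ne_top]
    have hg : ∫⁻ x : ℝ, ENNReal.ofReal (Real.exp (-t * x ^ 2)) = ENNReal.ofReal (Real.sqrt (π / t)) := by
      rw [← ofReal_integral_eq_lintegral_ofReal (integrable_exp_neg_mul_sq ht')
        (Filter.Eventually.of_forall fun x => (Real.exp_pos _).le), integral_gaussian]
    rw [hg, ← ENNReal.ofReal_mul (by positivity), ← ENNReal.ofReal_mul (Real.sqrt_nonneg _)]
    congr 1
    have hsd : Real.sqrt (π / t) = Real.sqrt π * t ^ (-(1/2) : ℝ) := by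
      rw [Real.sqrt_div pi_pos.le, Real.sqrt_eq_rpow t, Real.rpow_neg ht'.le, div_eq_mul_inv]
    have ht2 : t ^ (s/2-1/2-1 : ℝ) = t ^ (s/2-1 : ℝ) * t ^ (-(1/2) : ℝ) := by
      rw [← Real.rpow_add ht']; ring_nf
    rw [hsd, ht2]
    ring
  rw [setLIntegral_congr_fun measurableSet_Ioi inner,
    lintegral_const_mul' _ _ ENNReal.ofReal_ne_top,
    lint_gamma hσ' (by positivity : (0:ℝ) < a ^ 2),
    ← ENNReal.ofReal_mul (Real.sqrt_nonneg _),
    ofReal_inv_gamma_mul (Real.Gamma_pos_of_pos hσ)]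
  congr 1
  have h2 : ((1:ℝ) / a ^ 2) ^ (s / 2 - 1 / 2) = a ^ (1 - s) := by
    rw [one_div, ← Real.rpow_two, ← Real.rpow_neg_one (a ^ ((2:ℝ)) : ℝ), ← Real.rpow_mul ha.le,
      ← Real.rpow_mul ha.le, show 2 * (-1 : ℝ) * (s / 2 - 1 / 2) = 1 - s by ring]
  rw [h2, show (s / 2 - 1 / 2) = (s - 1) / 2 by ring]
  ring

lemma lint_LC (m : ℕ) {s : ℝ} (hs : (m:ℝ) + 2 < s) :
    ∫⁻ y in Ioi (0:ℝ), ENNReal.ofReal ((y:ℝ) ^ m * (1 + y) ^ (1 - s)) =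
      ENNReal.ofReal ((m.factorial : ℝ) * Real.Gamma (s - m - 2) / Real.Gamma (s - 1)) := by
  have h1s : 0 < s - 1 := by have : (0:ℝ) ≤ m := Nat.cast_nonneg m; linarith
  have hsm2 : 0 < s - (m:ℝ) - 2 := by linarith
  have step0 : ∫⁻ y in Ioi (0:ℝ), ENNReal.ofReal ((y:ℝ) ^ m * (1 + y) ^ (1 - s))
      = ∫⁻ y in Ioi (0:ℝ), ENNReal.ofReal ((y:ℝ) ^ m * (1 + y) ^ (-(s - 1))) := by
    refine setLIntegral_congr_fun measurableSet_Ioi fun y _ => ?_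
    rw [show (1 - s) = -(s - 1) by ring]
  rw [step0, lint_rpow_neg_eq (g := fun y : ℝ => y ^ m) (r := fun y => 1 + y)
    measurableSet_Ioi (by fun_prop) (by fun_prop)
    (fun y hy => pow_nonneg (le_of_lt hy) m) (fun y hy => by have h : (0:ℝ) < y := hy; show (0:ℝ) < 1 + y; linarith)
    h1s]
  have inner : ∀ t ∈ Ioi (0:ℝ),
      (∫⁻ y in Ioi (0:ℝ), ENNReal.ofReal ((y:ℝ) ^ m * (t ^ (s - 1 - 1) * Real.exp (-((1 + y) * t)))))
      = ENNReal.ofReal (Real.Gamma ((m:ℝ) + 1)) *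
          ENNReal.ofReal (t ^ (s - (m:ℝ) - 2 - 1) * Real.exp (-(1 * t))) := by
    intro t ht
    have ht' : (0:ℝ) < t := ht
    have step1 : ∀ y ∈ Ioi (0:ℝ),
        ENNReal.ofReal ((y:ℝ) ^ m * (t ^ (s - 1 - 1) * Real.exp (-((1 + y) * t))))
          = ENNReal.ofReal (t ^ (s - 1 - 1) * Real.exp (-t)) *
              ENNReal.ofReal (y ^ ((m:ℝ) + 1 - 1) * Real.exp (-(t * y))) := by
      intro y hy
      have hy' : (0:ℝ) < y := hy
      rw [← ENNReal.ofReal_mul (by positivity)]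
      congr 1
      rw [show ((m:ℝ) + 1 - 1) = ((m:ℕ) : ℝ) by ring, Real.rpow_natCast,
        show -((1 + y) * t) = -t + -(t * y) by ring, Real.exp_add]
      ring
    rw [setLIntegral_congr_fun measurableSet_Ioi step1,
      lintegral_const_mul' _ _ ENNReal.ofReal_ne_top,
      lint_gamma (by positivity : (0:ℝ) < (m:ℝ) + 1) ht',
      ← ENNReal.ofReal_mul (by positivity), ← ENNReal.ofReal_mul (Real.Gamma_nonneg_of_nonneg ?_)]
    swap
    · positivity
    congr 1
    have h1t : ((1:ℝ) / t) ^ ((m:ℝ) + 1) = t ^ (-((m:ℝ) + 1)) := by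
      rw [one_div, Real.inv_rpow ht'.le, ← Real.rpow_neg ht'.le]
    rw [h1t]
    have ht2 : t ^ (s - (m:ℝ) - 2 - 1) = t ^ (s - 1 - 1) * t ^ (-((m:ℝ) + 1)) := by
      rw [← Real.rpow_add ht']; ring_nf
    rw [ht2, one_mul]
    ring
  rw [setLIntegral_congr_fun measurableSet_Ioi inner,
    lintegral_const_mul' _ _ ENNReal.ofReal_ne_top,
    lint_gamma hsm2 one_pos,
    ← ENNReal.ofReal_mul (Real.Gamma_nonneg_of_nonneg (by positivity)),
    ofReal_inv_gamma_mul (Real.Gamma_pos_of_pos h1s)]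
  congr 1
  rw [show ((1:ℝ)/1) = 1 by norm_num, Real.one_rpow, one_mul,
    show ((m:ℝ) + 1) = ((m:ℕ) : ℝ) + 1 by norm_num, Real.Gamma_nat_eq_factorial]

lemma volume_complex_ball (m : ℕ) {y : ℝ} (hy : 0 < y) :
    volume {x : Fin m → ℂ | ∑ k, ‖x k‖ ^ 2 < y} =
      ENNReal.ofReal (π ^ m * y ^ m / m.factorial) := by
  cases m with
  | zero =>
      have h : {x : Fin 0 → ℂ | ∑ k, ‖x k‖ ^ 2 < y} = univ := by
        ext x; simp [hy]
      rw [h]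
      rw [MeasureTheory.volume_pi, Measure.pi_univ]
      simp [Nat.factorial]
  | succ k =>
      have key := Complex.volume_sum_rpow_lt (ι := Fin (k+1)) (p := 2) one_le_two (Real.sqrt y)
      have hset : {x : Fin (k+1) → ℂ | (∑ i, ‖x i‖ ^ (2:ℝ)) ^ (1/(2:ℝ)) < Real.sqrt y}
          = {x : Fin (k+1) → ℂ | ∑ j, ‖x j‖ ^ 2 < y} := by
        ext x
        have hsum : ∀ i, ‖x i‖ ^ (2:ℝ) = ‖x i‖ ^ 2 := fun i => by
          rw [show (2:ℝ) = ((2:ℕ):ℝ) by norm_num, Real.rpow_natCast]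
        simp only [mem_setOf_eq, hsum]
        rw [Real.sqrt_eq_rpow]
        exact Real.rpow_lt_rpow_iff (Finset.sum_nonneg fun i _ => sq_nonneg _) hy.le (by norm_num)
      rw [hset] at key
      rw [key, Fintype.card_fin]
      rw [show ((2:ℝ)/2 + 1) = 2 by norm_num, Real.Gamma_two,
        show (2 * (((k+1:ℕ)):ℝ)/2 + 1) = ((k+1:ℕ):ℝ) + 1 by push_cast; ring,
        Real.Gamma_nat_eq_factorial]
      rw [← ENNReal.ofReal_pow (Real.sqrt_nonneg _), ← ENNReal.ofReal_mul (by positivity)]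
      congr 1
      rw [pow_mul, Real.sq_sqrt hy.le, mul_one]
      ring

lemma measurableSet_siegelDomain (n : ℕ) : MeasurableSet (siegelDomain n) := by
  apply measurableSet_lt
  · exact Finset.measurable_sum _ fun k _ =>
      (continuous_norm.measurable.comp ((measurable_pi_apply k).comp measurable_fst)).pow_const 2
  · exact Complex.measurable_im.comp measurable_snd

lemma core (n : ℕ) (hn : 0 < n) {s : ℝ} (hs : (n : ℝ) + 1 < s) :
    ∫⁻ z in siegelDomain n, ENNReal.ofReal ((‖z.2 + Complex.I‖ / 2) ^ (-s)) =
      ENNReal.ofReal (4 * π ^ n * Real.Gamma (s - n - 1) / Real.Gamma (s / 2) ^ 2) := by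
  obtain ⟨m, rfl⟩ : ∃ m, n = m + 1 := ⟨n - 1, (Nat.succ_pred_eq_of_pos hn).symm⟩
  have hsm : (m : ℝ) + 2 < s := by push_cast at hs ⊢; linarith
  have hs1 : 1 < s := by have : (0:ℝ) ≤ m := Nat.cast_nonneg m; linarith
  have hU : MeasurableSet (siegelDomain (m+1)) := measurableSet_siegelDomain (m+1)
  set G : ℂ → ℝ≥0∞ := fun w => ENNReal.ofReal ((‖w + Complex.I‖ / 2) ^ (-s)) with hG
  have hGmeas : Measurable G := by
    apply ENNReal.measurable_ofReal.comp
    exact (((continuous_norm.comp (continuous_id.add continuous_const)).div_const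
      2).measurable).pow measurable_const
  set W : ℝ → ℝ≥0∞ := fun y =>
    (Ioi (0:ℝ)).indicator (fun y => ENNReal.ofReal (π ^ m * y ^ m / m.factorial)) y with hW
  have hWmeas : Measurable W := by
    apply Measurable.indicator _ measurableSet_Ioi
    fun_prop
  have hWne : ∀ y, W y ≠ ∞ := fun y => by
    simp only [hW]
    by_cases hy : y ∈ Ioi (0:ℝ)
    · rw [Set.indicator_of_mem hy]; exact ENNReal.ofReal_ne_top
    · rw [Set.indicator_of_notMem hy]; exact ENNReal.zero_ne_top
  -- Step 1
  have step1 : (∫⁻ z in siegelDomain (m+1),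
      ENNReal.ofReal ((‖z.2 + Complex.I‖ / 2) ^ (-s)))
      = ∫⁻ w : ℂ, G w * W w.im := by
    rw [← lintegral_indicator hU, Measure.volume_eq_prod _ _,
      lintegral_prod_symm ((siegelDomain (m+1)).indicator fun z : SiegelSpace (m+1) =>
        ENNReal.ofReal ((‖z.2 + Complex.I‖ / 2) ^ (-s)))
        (((hGmeas.comp measurable_snd).indicator hU).aemeasurable)]
    refine lintegral_congr fun w => ?_
    have hsect : MeasurableSet {x : Fin m → ℂ | ∑ k, ‖x k‖ ^ 2 < w.im} := by
      apply measurableSet_lt _ measurable_const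
      exact Finset.measurable_sum _ fun k _ =>
        (continuous_norm.measurable.comp (measurable_pi_apply k)).pow_const 2
    calc (∫⁻ x : Fin m → ℂ, (siegelDomain (m+1)).indicator
            (fun z : SiegelSpace (m+1) => G z.2) (x, w))
        = ∫⁻ x : Fin m → ℂ,
            ({x : Fin m → ℂ | ∑ k, ‖x k‖ ^ 2 < w.im}).indicator (fun _ => G w) x := by
          refine lintegral_congr fun x => ?_
          simp only [Set.indicator_apply]
          rfl
      _ = G w * volume {x : Fin m → ℂ | ∑ k, ‖x k‖ ^ 2 < w.im} := by
          rw [lintegral_indicator hsect, setLIntegral_const]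
      _ = G w * W w.im := by
          rcases le_or_gt w.im 0 with h | h
          · have hempty : {x : Fin m → ℂ | ∑ k, ‖x k‖ ^ 2 < w.im} = ∅ := by
              ext x
              simp only [mem_setOf_eq, mem_empty_iff_false, iff_false, not_lt]
              exact h.trans (Finset.sum_nonneg fun k _ => sq_nonneg _)
            rw [hempty, measure_empty]
            simp only [hW]
            rw [Set.indicator_of_notMem (by simpa using h), mul_zero]
          · rw [volume_complex_ball m h]
            simp only [hW]
            rw [Set.indicator_of_mem (Set.mem_Ioi.mpr h)]
  -- Step 2
  have step2 : ∫⁻ w : ℂ, G w * W w.im = ∫⁻ y : ℝ, (∫⁻ x : ℝ, G ⟨x, y⟩) * W y := by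
    have hmeas : Measurable fun w : ℂ => G w * W w.im :=
      hGmeas.mul (hWmeas.comp Complex.measurable_im)
    rw [← MeasurePreserving.lintegral_comp
      (Complex.volume_preserving_equiv_real_prod.symm Complex.measurableEquivRealProd) hmeas]
    rw [Measure.volume_eq_prod _ _, lintegral_prod_symm
      (fun q : ℝ × ℝ => G (Complex.measurableEquivRealProd.symm q) *
        W (Complex.measurableEquivRealProd.symm q).im)
      ((hmeas.comp (MeasurableEquiv.measurable _)).aemeasurable)]
    refine lintegral_congr fun y => ?_
    rw [← lintegral_mul_const' _ _ (hWne y)]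
    rfl
  -- Step 3
  have step3 : ∫⁻ y : ℝ, (∫⁻ x : ℝ, G ⟨x, y⟩) * W y
      = ∫⁻ y in Ioi (0:ℝ), (∫⁻ x : ℝ, G ⟨x, y⟩) * W y := by
    rw [← lintegral_indicator measurableSet_Ioi]
    refine lintegral_congr fun y => ?_
    by_cases hy : y ∈ Ioi (0:ℝ)
    · rw [Set.indicator_of_mem hy]
    · rw [Set.indicator_of_notMem hy]
      simp only [hW]
      rw [Set.indicator_of_notMem hy, mul_zero]
  -- inner x integral
  have hC1 : 0 ≤ Real.sqrt π * Real.Gamma ((s - 1) / 2) / Real.Gamma (s / 2) := by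
    apply div_nonneg (mul_nonneg (Real.sqrt_nonneg _) _) _
    · exact (Real.Gamma_pos_of_pos (by linarith)).le
    · exact (Real.Gamma_pos_of_pos (by linarith)).le
  have innerx : ∀ y : ℝ, 0 < y → ∫⁻ x : ℝ, G ⟨x, y⟩
      = ENNReal.ofReal ((2:ℝ) ^ s) *
          ENNReal.ofReal ((y + 1) ^ (1 - s) *
            (Real.sqrt π * Real.Gamma ((s - 1) / 2) / Real.Gamma (s / 2))) := by
    intro y hy
    have hy1 : (0:ℝ) < y + 1 := by linarith
    have habs : ∀ x : ℝ, (‖(⟨x, y⟩ : ℂ) + Complex.I‖ / 2) ^ (-s)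
        = (2:ℝ) ^ s * (x ^ 2 + (y + 1) ^ 2) ^ (-(s / 2)) := by
      intro x
      have h1 : (⟨x, y⟩ : ℂ) + Complex.I = ⟨x, y + 1⟩ := by
        apply Complex.ext <;> simp
      have hA : (0:ℝ) < x ^ 2 + (y + 1) ^ 2 := by positivity
      rw [h1, Complex.norm_def, Complex.normSq_mk,
        show x * x + (y + 1) * (y + 1) = x ^ 2 + (y + 1) ^ 2 by ring,
        Real.sqrt_eq_rpow,
        Real.div_rpow (Real.rpow_nonneg hA.le _) (by norm_num : (0:ℝ) ≤ 2),
        ← Real.rpow_mul hA.le, Real.rpow_neg (by norm_num : (0:ℝ) ≤ 2), div_eq_mul_inv, inv_inv,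
        show (1/2 * -s : ℝ) = -(s/2) by ring]
      ring
    calc ∫⁻ x : ℝ, G ⟨x, y⟩
        = ∫⁻ x : ℝ, ENNReal.ofReal ((2:ℝ) ^ s) *
            ENNReal.ofReal ((x ^ 2 + (y + 1) ^ 2) ^ (-(s / 2))) := by
          refine lintegral_congr fun x => ?_
          rw [hG]
          simp only
          rw [habs x, ENNReal.ofReal_mul (by positivity)]
      _ = ENNReal.ofReal ((2:ℝ) ^ s) *
            ∫⁻ x : ℝ, ENNReal.ofReal ((x ^ 2 + (y + 1) ^ 2) ^ (-(s / 2))) :=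
          lintegral_const_mul' _ _ ENNReal.ofReal_ne_top
      _ = _ := by rw [lint_LB hy1 hs1]
  rw [step1, step2, step3]
  have step4 : ∫⁻ y in Ioi (0:ℝ), (∫⁻ x : ℝ, G ⟨x, y⟩) * W y
      = ∫⁻ y in Ioi (0:ℝ),
          ENNReal.ofReal ((2:ℝ) ^ s * (Real.sqrt π * Real.Gamma ((s - 1) / 2) / Real.Gamma (s / 2))
            * π ^ m / m.factorial) * ENNReal.ofReal ((y:ℝ) ^ m * (1 + y) ^ (1 - s)) := by
    refine setLIntegral_congr_fun measurableSet_Ioi fun y hy => ?_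
    have hy' : (0:ℝ) < y := hy
    rw [innerx y hy']
    simp only [hW]
    rw [Set.indicator_of_mem hy]
    rw [← ENNReal.ofReal_mul (by positivity), ← ENNReal.ofReal_mul (by positivity),
      ← ENNReal.ofReal_mul (by positivity)]
    congr 1
    rw [show (1 + y : ℝ) = y + 1 by ring]
    field_simp
  rw [step4, lintegral_const_mul' _ _ ENNReal.ofReal_ne_top, lint_LC m hsm,
    ← ENNReal.ofReal_mul (by positivity)]
  congr 1
  -- final Gamma algebra
  have hg2 : Real.Gamma (s / 2) ≠ 0 := (Real.Gamma_pos_of_pos (by linarith)).ne'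
  have hg1 : Real.Gamma (s - 1) ≠ 0 := (Real.Gamma_pos_of_pos (by linarith)).ne'
  have hmf : (m.factorial : ℝ) ≠ 0 := Nat.cast_ne_zero.mpr m.factorial_ne_zero
  have hdup : Real.Gamma ((s - 1) / 2) * Real.Gamma (s / 2)
      = Real.Gamma (s - 1) * 2 ^ (2 - s) * Real.sqrt π := by
    have h := Real.Gamma_mul_Gamma_add_half ((s - 1) / 2)
    rw [show (s - 1) / 2 + 1 / 2 = s / 2 by ring, show 2 * ((s - 1) / 2) = s - 1 by ring,
      show (1 - (s - 1) : ℝ) = 2 - s by ring] at h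
    exact h
  have h4 : (2:ℝ) ^ s * 2 ^ (2 - s) = 4 := by
    rw [← Real.rpow_add two_pos, show s + (2 - s) = ((2:ℕ):ℝ) by push_cast; ring,
      Real.rpow_natCast]
    norm_num
  have hππ : Real.sqrt π * Real.sqrt π = π := Real.mul_self_sqrt pi_pos.le
  have hkey : (2:ℝ) ^ s * (Real.sqrt π * Real.Gamma ((s - 1) / 2)) * Real.Gamma (s / 2)
      = 4 * π * Real.Gamma (s - 1) := by
    calc (2:ℝ) ^ s * (Real.sqrt π * Real.Gamma ((s - 1) / 2)) * Real.Gamma (s / 2)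
        = 2 ^ s * Real.sqrt π * (Real.Gamma ((s - 1) / 2) * Real.Gamma (s / 2)) := by ring
      _ = 2 ^ s * Real.sqrt π * (Real.Gamma (s - 1) * 2 ^ (2 - s) * Real.sqrt π) := by rw [hdup]
      _ = (2 ^ s * 2 ^ (2 - s)) * (Real.sqrt π * Real.sqrt π) * Real.Gamma (s - 1) := by ring
      _ = 4 * π * Real.Gamma (s - 1) := by rw [h4, hππ]
  rw [show (s - ((m+1:ℕ):ℝ) - 1) = s - (m:ℝ) - 2 by push_cast; ring,
    show ((m+1:ℕ):ℕ) = m + 1 from rfl, pow_succ π m]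
  field_simp
  linear_combination Real.Gamma (s - (m:ℝ) - 2) * hkey

lemma rho_eval (n : ℕ) (z : SiegelSpace n) :
    siegelRho n z (siegelPt n) = Complex.I / 2 * (-Complex.I - z.2) := by
  simp [siegelRho, siegelPt, Complex.conj_I]


end SiegelHelpers

open Set in
/-- For `1 ≤ p < ∞` and a positive integer `N` with `pN > n+1`, the function
`f_N(z) = ρ(z, 𝐢)^{−N}` belongs to `L^p(U)` and
`‖f_N‖_p^p = 4π^n Γ(pN − n − 1) / Γ(pN/2)²`. -/
theorem fN_memLp_and_norm (n : ℕ) (hn : 0 < n) (p : ℝ) (hp : 1 ≤ p) (N : ℕ) (hN : 0 < N)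
    (hpN : (n : ℝ) + 1 < p * N) :
    MemLp (fun z => siegelRho n z (siegelPt n) ^ (-(N : ℂ))) (ENNReal.ofReal p)
        (siegelMeasure n) ∧
      ∫ z in siegelDomain n, ‖siegelRho n z (siegelPt n) ^ (-(N : ℂ))‖ ^ p
        = 4 * π ^ n * Real.Gamma (p * N - n - 1) / Real.Gamma (p * N / 2) ^ 2 := by
  have hU := measurableSet_siegelDomain n
  set s : ℝ := p * N with hsdef
  have hs : (n : ℝ) + 1 < s := hpN
  have hp0 : (0:ℝ) < p := by linarith
  -- rewrite the function
  have h_f : (fun z : SiegelSpace n => siegelRho n z (siegelPt n) ^ (-(N : ℂ)))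
      = fun z => (siegelRho n z (siegelPt n) ^ N)⁻¹ := by
    funext z
    by_cases hz : siegelRho n z (siegelPt n) = 0
    · simp [hz, Complex.zero_cpow (show (-(N:ℂ)) ≠ 0 by
        simp only [ne_eq, neg_eq_zero, Nat.cast_eq_zero]; exact hN.ne'), hN.ne']
    · rw [Complex.cpow_neg, Complex.cpow_natCast]
  have hmeasρ : Measurable fun z : SiegelSpace n => siegelRho n z (siegelPt n) := by
    have : (fun z : SiegelSpace n => siegelRho n z (siegelPt n))
        = fun z => Complex.I / 2 * (-Complex.I - z.2) := funext (rho_eval n)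
    rw [this]
    exact (continuous_const.mul (continuous_const.sub continuous_snd)).measurable
  have hfmeas : Measurable fun z : SiegelSpace n => siegelRho n z (siegelPt n) ^ (-(N : ℂ)) := by
    rw [h_f]; exact (hmeasρ.pow_const N).inv
  -- pointwise norm identity on the domain
  have habs : ∀ z ∈ siegelDomain n,
      ‖siegelRho n z (siegelPt n) ^ (-(N : ℂ))‖ ^ p
        = (‖z.2 + Complex.I‖ / 2) ^ (-s) := by
    intro z hz
    have him : (0:ℝ) < (z.2 + Complex.I).im := by
      have h1 : (0:ℝ) ≤ ∑ k, ‖z.1 k‖ ^ 2 :=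
        Finset.sum_nonneg fun k _ => sq_nonneg _
      have h2 : ∑ k, ‖z.1 k‖ ^ 2 < z.2.im := hz
      simp only [Complex.add_im, Complex.I_im]
      linarith
    have hzI : z.2 + Complex.I ≠ 0 := fun h => by rw [h] at him; simp at him
    have hB : (0:ℝ) < ‖z.2 + Complex.I‖ / 2 := by
      have := norm_pos_iff.mpr hzI; linarith
    have hρabs : ‖siegelRho n z (siegelPt n)‖ = ‖z.2 + Complex.I‖ / 2 := by
      rw [rho_eval, show -Complex.I - z.2 = -(z.2 + Complex.I) by ring, norm_mul, norm_neg,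
        norm_div, Complex.norm_I, Complex.norm_two]
      ring
    have hρ0 : siegelRho n z (siegelPt n) ≠ 0 := by
      intro h
      rw [h, norm_zero] at hρabs
      linarith
    rw [Complex.cpow_neg, Complex.cpow_natCast, norm_inv, norm_pow, hρabs,
      ← Real.rpow_natCast (‖z.2 + Complex.I‖ / 2) N, ← Real.rpow_neg hB.le,
      ← Real.rpow_mul hB.le, show -(N:ℝ) * p = -s by rw [hsdef]; ring]
  have hV0 : (0:ℝ) ≤ 4 * π ^ n * Real.Gamma (s - n - 1) / Real.Gamma (s / 2) ^ 2 := by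
    have hn1 : (1:ℝ) ≤ (n:ℝ) := by exact_mod_cast hn
    have h1 : 0 < Real.Gamma (s - n - 1) := Real.Gamma_pos_of_pos (by linarith)
    have h2 : 0 < Real.Gamma (s / 2) := Real.Gamma_pos_of_pos (by linarith)
    apply le_of_lt
    apply div_pos (mul_pos (by positivity) h1) (pow_pos h2 2)
  have key : ∫⁻ z in siegelDomain n,
      ENNReal.ofReal (‖siegelRho n z (siegelPt n) ^ (-(N : ℂ))‖ ^ p)
      = ENNReal.ofReal (4 * π ^ n * Real.Gamma (s - n - 1) / Real.Gamma (s / 2) ^ 2) := by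
    rw [setLIntegral_congr_fun hU fun z hz => by rw [habs z hz],
      core n hn hs]
  constructor
  · refine ⟨hfmeas.aestronglyMeasurable, ?_⟩
    rw [eLpNorm_eq_lintegral_rpow_enorm_toReal
      (by simp only [ne_eq, ENNReal.ofReal_eq_zero, not_le]; exact hp0) ENNReal.ofReal_ne_top]
    rw [ENNReal.toReal_ofReal hp0.le]
    apply ENNReal.rpow_lt_top_of_nonneg (by positivity)
    have hTeq : ∫⁻ z, ‖siegelRho n z (siegelPt n) ^ (-(N:ℂ))‖ₑ ^ p ∂(siegelMeasure n)
        = ENNReal.ofReal (4 * π ^ n * Real.Gamma (s - n - 1) / Real.Gamma (s / 2) ^ 2) := by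
      rw [siegelMeasure, ← key]
      refine setLIntegral_congr_fun hU fun z hz => ?_
      rw [← ofReal_norm,
        ← ENNReal.ofReal_rpow_of_nonneg (norm_nonneg _) hp0.le]
    rw [hTeq]
    exact ENNReal.ofReal_ne_top
  · rw [integral_eq_lintegral_of_nonneg_ae
      (Filter.Eventually.of_forall fun z => Real.rpow_nonneg (norm_nonneg _) p)
      (((continuous_norm.measurable.comp hfmeas).pow
        measurable_const).aestronglyMeasurable)]
    rw [key, ENNReal.toReal_ofReal hV0]
end
end

section
/- Let n be a positive integer and 0 < α < n+1. Then T_α is unbounded from L^{(n+1)/(n+1−α)}(U) to L^∞(U); that is, there is no constant C > 0 such that for every f ∈ L^{(n+1)/(n+1−α)}(U) the integral defining T_α f converges absolutely almost everywhere and ‖T_α f‖_{L^∞(U)} ≤ C‖f‖_{L^{(n+1)/(n+1−α)}(U)}. -/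
set_option maxHeartbeats 1000000


open MeasureTheory Complex Real ENNReal

noncomputable section

lemma master (m N : ℕ) (M : ℝ → ℝ≥0∞) (hM : Measurable M) :
    ∫⁻ w : (Fin m → ℂ) × ℂ,
      Set.indicator {w : (Fin m → ℂ) × ℂ |
          (∀ k, ‖w.1 k‖ < Real.sqrt (w.2.im / N)) ∧
          |w.2.re| < w.2.im ∧ 2 < w.2.im}
        (fun w => M w.2.im) w
    = ∫⁻ y in Set.Ioi (2:ℝ),
        ENNReal.ofReal (2 * y) * ((ENNReal.ofReal (y / N) * (NNReal.pi : ℝ≥0∞)) ^ m * M y) := by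
  have hSmeas : ∀ (r : ℝ), MeasurableSet {w' : Fin m → ℂ | ∀ k, ‖w' k‖ < r} := by
    intro r
    have : {w' : Fin m → ℂ | ∀ k, ‖w' k‖ < r}
        = ⋂ k, {w' : Fin m → ℂ | ‖w' k‖ < r} := by
      ext w'; simp
    rw [this]
    exact MeasurableSet.iInter fun k =>
      measurableSet_lt ((continuous_norm.comp (continuous_apply k)).measurable)
        measurable_const
  have hRmeas : MeasurableSet {w : (Fin m → ℂ) × ℂ |
      (∀ k, ‖w.1 k‖ < Real.sqrt (w.2.im / N)) ∧
      |w.2.re| < w.2.im ∧ 2 < w.2.im} := by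
    have h1 : {w : (Fin m → ℂ) × ℂ | ∀ k, ‖w.1 k‖ < Real.sqrt (w.2.im / N)}
        = ⋂ k, {w : (Fin m → ℂ) × ℂ | ‖w.1 k‖ < Real.sqrt (w.2.im / N)} := by
      ext w; simp
    have h1m : MeasurableSet {w : (Fin m → ℂ) × ℂ |
        ∀ k, ‖w.1 k‖ < Real.sqrt (w.2.im / N)} := by
      rw [h1]
      refine MeasurableSet.iInter fun k => measurableSet_lt ?_ ?_
      · exact (continuous_norm.comp ((continuous_apply k).comp continuous_fst)).measurable
      · exact (Real.continuous_sqrt.comp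
          ((Complex.continuous_im.comp continuous_snd).div_const _)).measurable
    have h2m : MeasurableSet {w : (Fin m → ℂ) × ℂ | |w.2.re| < w.2.im} :=
      measurableSet_lt (_root_.continuous_abs.comp
        (Complex.continuous_re.comp continuous_snd)).measurable
        (Complex.continuous_im.comp continuous_snd).measurable
    have h3m : MeasurableSet {w : (Fin m → ℂ) × ℂ | 2 < w.2.im} :=
      measurableSet_lt measurable_const (Complex.continuous_im.comp continuous_snd).measurable
    exact h1m.inter (h2m.inter h3m)
  have hMim : Measurable fun w : (Fin m → ℂ) × ℂ => M w.2.im :=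
    hM.comp (Complex.measurable_im.comp measurable_snd)
  rw [MeasureTheory.Measure.volume_eq_prod, lintegral_prod_symm' _ (hMim.indicator hRmeas)]
  have step1 : ∀ wn : ℂ,
      (∫⁻ w' : Fin m → ℂ,
        Set.indicator {w : (Fin m → ℂ) × ℂ |
          (∀ k, ‖w.1 k‖ < Real.sqrt (w.2.im / N)) ∧
          |w.2.re| < w.2.im ∧ 2 < w.2.im} (fun w => M w.2.im) (w', wn))
      = Set.indicator {c : ℂ | |c.re| < c.im ∧ 2 < c.im}
          (fun c => (ENNReal.ofReal (c.im / N) * (NNReal.pi : ℝ≥0∞)) ^ m * M c.im) wn := by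
    intro wn
    by_cases h : |wn.re| < wn.im ∧ 2 < wn.im
    · have hfun : ∀ w' : Fin m → ℂ,
          Set.indicator {w : (Fin m → ℂ) × ℂ |
            (∀ k, ‖w.1 k‖ < Real.sqrt (w.2.im / N)) ∧
            |w.2.re| < w.2.im ∧ 2 < w.2.im} (fun w => M w.2.im) (w', wn)
          = Set.indicator {w' : Fin m → ℂ | ∀ k, ‖w' k‖ < Real.sqrt (wn.im / N)}
              (fun _ => M wn.im) w' := by
        intro w'
        simp only [Set.indicator_apply, Set.mem_setOf_eq]
        by_cases hw' : ∀ k, ‖w' k‖ < Real.sqrt (wn.im / N)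
        · rw [if_pos (⟨hw', h.1, h.2⟩ : _ ∧ _), if_pos hw']
        · rw [if_neg (fun hc => hw' hc.1), if_neg hw']
      simp only [hfun]
      rw [lintegral_indicator_const (hSmeas _)]
      have hset : {w' : Fin m → ℂ | ∀ k, ‖w' k‖ < Real.sqrt (wn.im / N)}
          = Set.pi Set.univ (fun _ => Metric.ball (0:ℂ) (Real.sqrt (wn.im / N))) := by
        ext w'
        simp [Complex.dist_eq, Metric.mem_ball]
      have hy0 : (0:ℝ) ≤ wn.im / N := by
        have : (0:ℝ) < wn.im := lt_trans two_pos h.2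
        positivity
      rw [hset, volume_pi_pi]
      simp only [Complex.volume_ball]
      rw [Finset.prod_const, Finset.card_univ, Fintype.card_fin]
      rw [Set.indicator_apply, if_pos (show wn ∈ _ from h)]
      rw [mul_comm]
      congr 2
      rw [← ENNReal.ofReal_pow (Real.sqrt_nonneg _), Real.sq_sqrt hy0]
    · rw [Set.indicator_apply, if_neg (show wn ∉ _ from h)]
      have hfun : ∀ w' : Fin m → ℂ,
          Set.indicator {w : (Fin m → ℂ) × ℂ |
            (∀ k, ‖w.1 k‖ < Real.sqrt (w.2.im / N)) ∧
            |w.2.re| < w.2.im ∧ 2 < w.2.im} (fun w => M w.2.im) (w', wn) = 0 := fun w' =>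
        Set.indicator_of_notMem (fun hc => h hc.2) _
      simp only [hfun, lintegral_zero]
  simp only [step1]
  have hTmeas : MeasurableSet {c : ℂ | |c.re| < c.im ∧ 2 < c.im} := by
    refine MeasurableSet.inter ?_ ?_
    · exact measurableSet_lt (_root_.continuous_abs.comp Complex.continuous_re).measurable
        Complex.continuous_im.measurable
    · exact measurableSet_lt measurable_const Complex.continuous_im.measurable
  have hKmeas : Measurable fun c : ℂ =>
      (ENNReal.ofReal (c.im / N) * (NNReal.pi : ℝ≥0∞)) ^ m * M c.im := by
    refine Measurable.mul ?_ (hM.comp Complex.measurable_im)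
    refine Measurable.pow ?_ measurable_const
    exact (ENNReal.measurable_ofReal.comp (Complex.measurable_im.div_const _)).mul_const _
  have hGmeas : Measurable (Set.indicator {c : ℂ | |c.re| < c.im ∧ 2 < c.im}
      (fun c => (ENNReal.ofReal (c.im / N) * (NNReal.pi : ℝ≥0∞)) ^ m * M c.im)) :=
    hKmeas.indicator hTmeas
  rw [← MeasurePreserving.lintegral_comp
    (Complex.volume_preserving_equiv_real_prod.symm) hGmeas]
  have step2 : ∀ p : ℝ × ℝ,
      Set.indicator {c : ℂ | |c.re| < c.im ∧ 2 < c.im}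
        (fun c => (ENNReal.ofReal (c.im / N) * (NNReal.pi : ℝ≥0∞)) ^ m * M c.im)
        (Complex.measurableEquivRealProd.symm p)
      = Set.indicator {p : ℝ × ℝ | |p.1| < p.2 ∧ 2 < p.2}
        (fun p => (ENNReal.ofReal (p.2 / N) * (NNReal.pi : ℝ≥0∞)) ^ m * M p.2) p := by
    intro p
    simp only [Set.indicator_apply, Set.mem_setOf_eq,
      Complex.measurableEquivRealProd_symm_apply]
  simp only [step2]
  rw [MeasureTheory.Measure.volume_eq_prod, lintegral_prod_symm' _ (by
    refine Measurable.indicator ?_ ?_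
    · refine Measurable.mul ?_ (hM.comp measurable_snd)
      refine Measurable.pow ?_ measurable_const
      exact (ENNReal.measurable_ofReal.comp (measurable_snd.div_const _)).mul_const _
    · refine MeasurableSet.inter ?_ ?_
      · exact measurableSet_lt (_root_.continuous_abs.comp continuous_fst).measurable
          continuous_snd.measurable
      · exact measurableSet_lt measurable_const continuous_snd.measurable)]
  have step3 : ∀ y : ℝ,
      (∫⁻ x : ℝ, Set.indicator {p : ℝ × ℝ | |p.1| < p.2 ∧ 2 < p.2}
        (fun p => (ENNReal.ofReal (p.2 / N) * (NNReal.pi : ℝ≥0∞)) ^ m * M p.2) (x, y))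
      = Set.indicator (Set.Ioi (2:ℝ))
          (fun y => ENNReal.ofReal (2 * y) *
            ((ENNReal.ofReal (y / N) * (NNReal.pi : ℝ≥0∞)) ^ m * M y)) y := by
    intro y
    by_cases hy : 2 < y
    · have hfun : ∀ x : ℝ,
          Set.indicator {p : ℝ × ℝ | |p.1| < p.2 ∧ 2 < p.2}
            (fun p => (ENNReal.ofReal (p.2 / N) * (NNReal.pi : ℝ≥0∞)) ^ m * M p.2) (x, y)
          = Set.indicator (Set.Ioo (-y) y)
              (fun _ => (ENNReal.ofReal (y / N) * (NNReal.pi : ℝ≥0∞)) ^ m * M y) x := by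
        intro x
        simp only [Set.indicator_apply, Set.mem_setOf_eq, Set.mem_Ioo]
        by_cases hx : |x| < y
        · rw [if_pos ⟨hx, hy⟩, if_pos (abs_lt.mp hx)]
        · rw [if_neg (fun hc => hx hc.1), if_neg (fun hc => hx (abs_lt.mpr hc))]
      simp only [hfun]
      rw [lintegral_indicator_const measurableSet_Ioo, Real.volume_Ioo,
        Set.indicator_of_mem (Set.mem_Ioi.mpr hy)]
      rw [mul_comm]
      congr 1
      ring_nf
    · rw [Set.indicator_of_notMem (fun hc => hy (Set.mem_Ioi.mp hc))]
      have hfun : ∀ x : ℝ,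
          Set.indicator {p : ℝ × ℝ | |p.1| < p.2 ∧ 2 < p.2}
            (fun p => (ENNReal.ofReal (p.2 / N) * (NNReal.pi : ℝ≥0∞)) ^ m * M p.2) (x, y) = 0 :=
        fun x => Set.indicator_of_notMem (fun hc => hy hc.2) _
      simp only [hfun, lintegral_zero]
  simp only [step3]
  rw [lintegral_indicator measurableSet_Ioi]

lemma int_finite {p₀ : ℝ} (hp : 1 < p₀) :
    IntegrableOn (fun y : ℝ => Real.log y ^ (-p₀) * y⁻¹) (Set.Ioi (2:ℝ)) := by
  have h2 : (0:ℝ) < 2 := two_pos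
  have key : ∀ x ∈ Set.Ici (2:ℝ),
      HasDerivAt (fun y : ℝ => (1 - p₀)⁻¹ * Real.log y ^ (1 - p₀))
        (Real.log x ^ (-p₀) * x⁻¹) x := by
    intro x hx
    have hx2 : (2:ℝ) ≤ x := hx
    have hx0 : (0:ℝ) < x := by linarith
    have hlog : 0 < Real.log x := Real.log_pos (by linarith)
    have h1 : HasDerivAt Real.log x⁻¹ x := Real.hasDerivAt_log (ne_of_gt hx0)
    have h2' : HasDerivAt (fun u : ℝ => u ^ (1 - p₀))
        ((1 - p₀) * Real.log x ^ (1 - p₀ - 1)) (Real.log x) :=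
      Real.hasDerivAt_rpow_const (Or.inl (ne_of_gt hlog))
    have h3 := (h2'.comp x h1).const_mul ((1 - p₀)⁻¹)
    have hne : (1 - p₀) ≠ 0 := by linarith
    refine h3.congr_deriv ?_
    have he : 1 - p₀ - 1 = -p₀ := by ring
    rw [he]
    field_simp
  have hpos : ∀ x ∈ Set.Ioi (2:ℝ), 0 ≤ Real.log x ^ (-p₀) * x⁻¹ := by
    intro x hx
    have hx2 : (2:ℝ) < x := hx
    exact mul_nonneg (Real.rpow_nonneg (Real.log_nonneg (by linarith)) _)
      (inv_nonneg.mpr (by linarith))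
  have htend : Filter.Tendsto (fun y : ℝ => (1 - p₀)⁻¹ * Real.log y ^ (1 - p₀))
      Filter.atTop (nhds ((1 - p₀)⁻¹ * 0)) := by
    refine Filter.Tendsto.const_mul _ ?_
    have he : ∀ y : ℝ, Real.log y ^ (1 - p₀) = Real.log y ^ (-(p₀ - 1)) := by
      intro y; congr 1; ring
    simp only [he]
    exact (tendsto_rpow_neg_atTop (by linarith)).comp Real.tendsto_log_atTop
  exact integrableOn_Ioi_deriv_of_nonneg' key hpos htend

lemma int_infinite :
    ∫⁻ y in Set.Ioi (2:ℝ), ENNReal.ofReal ((y * Real.log y)⁻¹) = ⊤ := by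
  by_contra hfin
  set φ : ℝ → ℝ := fun y => (y * Real.log y)⁻¹ with hφ
  have hφ_nonneg : ∀ y ∈ Set.Ioi (2:ℝ), 0 ≤ φ y := by
    intro y hy
    have : (2:ℝ) < y := hy
    have hlog : 0 < Real.log y := Real.log_pos (by linarith)
    exact inv_nonneg.mpr (by positivity)
  have hmeas : Measurable φ := (measurable_id.mul Real.measurable_log).inv
  have hInt : IntegrableOn φ (Set.Ioi (2:ℝ)) := by
    refine ⟨hmeas.aestronglyMeasurable, ?_⟩
    rw [hasFiniteIntegral_iff_ofReal ?_]
    · exact Ne.lt_top hfin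
    · exact (ae_restrict_iff' measurableSet_Ioi).mpr (Filter.Eventually.of_forall hφ_nonneg)
  have hbound : ∀ t : ℝ, 2 ≤ t →
      Real.log (Real.log t) - Real.log (Real.log 2) ≤ ∫ y in Set.Ioi (2:ℝ), φ y := by
    intro t ht
    have hderiv : ∀ x ∈ Set.uIcc (2:ℝ) t,
        HasDerivAt (fun y : ℝ => Real.log (Real.log y)) (φ x) x := by
      intro x hx
      rw [Set.uIcc_of_le ht] at hx
      have hx2 : (2:ℝ) ≤ x := hx.1
      have hx0 : (0:ℝ) < x := by linarith
      have hlog : 0 < Real.log x := Real.log_pos (by linarith)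
      have h1 : HasDerivAt Real.log x⁻¹ x := Real.hasDerivAt_log (ne_of_gt hx0)
      have h2 : HasDerivAt Real.log (Real.log x)⁻¹ (Real.log x) :=
        Real.hasDerivAt_log (ne_of_gt hlog)
      have := h2.comp x h1
      refine this.congr_deriv ?_
      simp [hφ, mul_inv_rev, mul_comm]
    have hii : IntervalIntegrable φ volume 2 t := by
      rw [intervalIntegrable_iff_integrableOn_Ioc_of_le ht]
      exact hInt.mono_set Set.Ioc_subset_Ioi_self
    have heq := intervalIntegral.integral_eq_sub_of_hasDerivAt hderiv hii
    rw [← heq, intervalIntegral.integral_of_le ht]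
    exact setIntegral_mono_set hInt
      ((ae_restrict_iff' measurableSet_Ioi).mpr (Filter.Eventually.of_forall hφ_nonneg))
      (HasSubset.Subset.eventuallyLE Set.Ioc_subset_Ioi_self)
  obtain ⟨t, ht2, htB⟩ : ∃ t, 2 ≤ t ∧
      (∫ y in Set.Ioi (2:ℝ), φ y) + Real.log (Real.log 2) < Real.log (Real.log t) := by
    have h := (Real.tendsto_log_atTop.comp Real.tendsto_log_atTop).eventually_gt_atTop
      ((∫ y in Set.Ioi (2:ℝ), φ y) + Real.log (Real.log 2))
    rcases (h.and (Filter.eventually_ge_atTop 2)).exists with ⟨t, h1, h2⟩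
    exact ⟨t, h2, h1⟩
  have := hbound t ht2
  linarith

/-- For `0 < α < n+1`, `T_α` is unbounded from `L^{(n+1)/(n+1−α)}(U)` to `L^∞(U)`. -/
theorem Talpha_not_bounded_endpoint_infty (n : ℕ) (hn : 0 < n) (α : ℝ)
    (hα0 : 0 < α) (hα1 : α < (n : ℝ) + 1) :
    ¬ TalphaBounded n α (ENNReal.ofReal (((n : ℝ) + 1) / ((n : ℝ) + 1 - α))) ⊤ := by
  rintro ⟨C, hC, hbound⟩
  set s : ℝ := (n : ℝ) + 1 - α with hs_def
  have hs : 0 < s := by rw [hs_def]; linarith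
  set p₀ : ℝ := ((n : ℝ) + 1) / s with hp₀_def
  have hn1 : (0:ℝ) < (n:ℝ) + 1 := by positivity
  have hp₀ : 1 < p₀ := by
    rw [hp₀_def]
    rw [one_lt_div hs, hs_def]
    linarith
  have hp₀pos : 0 < p₀ := by linarith
  have hsp₀ : s * p₀ = (n : ℝ) + 1 := by
    rw [hp₀_def]
    field_simp
  set g : ℝ → ℝ := fun y => y ^ (-s) / Real.log y with hg_def
  have hgmeas : Measurable g := (measurable_id.pow measurable_const).div Real.measurable_log
  have hgpos : ∀ y : ℝ, 2 < y → 0 < g y := by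
    intro y hy
    have h0 : (0:ℝ) < y := by linarith
    have hlog : 0 < Real.log y := Real.log_pos (by linarith)
    exact div_pos (Real.rpow_pos_of_pos h0 _) hlog
  set R : Set (SiegelSpace n) := {w : SiegelSpace n |
      (∀ k, ‖w.1 k‖ < Real.sqrt (w.2.im / ((2 * n : ℕ) : ℝ))) ∧
      |w.2.re| < w.2.im ∧ 2 < w.2.im} with hR_def
  have hRmeas : MeasurableSet R := by
    rw [hR_def]
    have h1 : {w : SiegelSpace n |
        ∀ k, ‖w.1 k‖ < Real.sqrt (w.2.im / ((2 * n : ℕ) : ℝ))}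
        = ⋂ k, {w : SiegelSpace n |
            ‖w.1 k‖ < Real.sqrt (w.2.im / ((2 * n : ℕ) : ℝ))} := by
      ext w; simp
    have h1m : MeasurableSet {w : SiegelSpace n |
        ∀ k, ‖w.1 k‖ < Real.sqrt (w.2.im / ((2 * n : ℕ) : ℝ))} := by
      rw [h1]
      refine MeasurableSet.iInter fun k => measurableSet_lt ?_ ?_
      · exact (continuous_norm.comp ((continuous_apply k).comp continuous_fst)).measurable
      · exact (Real.continuous_sqrt.comp
          ((Complex.continuous_im.comp continuous_snd).div_const _)).measurable
    have h2m : MeasurableSet {w : SiegelSpace n | |w.2.re| < w.2.im} :=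
      measurableSet_lt (_root_.continuous_abs.comp
        (Complex.continuous_re.comp continuous_snd)).measurable
        (Complex.continuous_im.comp continuous_snd).measurable
    have h3m : MeasurableSet {w : SiegelSpace n | 2 < w.2.im} :=
      measurableSet_lt measurable_const (Complex.continuous_im.comp continuous_snd).measurable
    exact h1m.inter (h2m.inter h3m)
  set f : SiegelSpace n → ℂ := R.indicator (fun w => ((g w.2.im : ℝ) : ℂ)) with hf_def
  have hfmeas : Measurable f := by
    rw [hf_def]
    exact (Complex.measurable_ofReal.comp
      (hgmeas.comp (Complex.measurable_im.comp measurable_snd))).indicator hRmeas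
  have hRsubU : R ⊆ siegelDomain n := by
    intro w hw
    obtain ⟨hw1, _, hw3⟩ := hw
    have hy : (0:ℝ) < w.2.im := by linarith
    have hN : (0:ℝ) < ((2 * n : ℕ) : ℝ) := by
      have : 0 < 2 * n := by omega
      exact_mod_cast this
    have hterm : ∀ k, ‖w.1 k‖ ^ 2 ≤ w.2.im / ((2 * n : ℕ) : ℝ) := by
      intro k
      have h := hw1 k
      have h2 : ‖w.1 k‖ ^ 2 < Real.sqrt (w.2.im / ((2 * n : ℕ) : ℝ)) ^ 2 :=
        pow_lt_pow_left₀ h (norm_nonneg _) two_ne_zero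
      rw [Real.sq_sqrt (by positivity)] at h2
      exact h2.le
    calc ∑ k, ‖w.1 k‖ ^ 2
        ≤ ∑ _k : Fin (n-1), w.2.im / ((2 * n : ℕ) : ℝ) :=
          Finset.sum_le_sum fun k _ => hterm k
      _ = (n - 1 : ℕ) * (w.2.im / ((2 * n : ℕ) : ℝ)) := by
          rw [Finset.sum_const, Finset.card_univ, Fintype.card_fin, nsmul_eq_mul]
      _ < w.2.im := by
          rw [div_eq_mul_inv]
          rw [← mul_assoc]
          have hcast : ((n - 1 : ℕ) : ℝ) ≤ ((2 * n : ℕ) : ℝ) / 2 := by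
            have : ((n - 1 : ℕ) : ℝ) ≤ (n : ℝ) := by
              have : (n - 1 : ℕ) ≤ n := Nat.sub_le n 1
              exact_mod_cast this
            have h2n : ((2 * n : ℕ) : ℝ) = 2 * (n : ℝ) := by push_cast; ring
            rw [h2n]; linarith
          have h1 : ((n - 1 : ℕ) : ℝ) * w.2.im * (((2 * n : ℕ) : ℝ))⁻¹
              ≤ (((2 * n : ℕ) : ℝ) / 2) * w.2.im * (((2 * n : ℕ) : ℝ))⁻¹ := by
            apply mul_le_mul_of_nonneg_right _ (by positivity)
            exact mul_le_mul_of_nonneg_right hcast hy.le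
          have h2 : (((2 * n : ℕ) : ℝ) / 2) * w.2.im * (((2 * n : ℕ) : ℝ))⁻¹
              = w.2.im / 2 := by
            field_simp
          rw [h2] at h1
          linarith
  have hmem : MemLp f (ENNReal.ofReal p₀) (siegelMeasure n) := by
    refine ⟨hfmeas.aestronglyMeasurable, ?_⟩
    have hp0 : ENNReal.ofReal p₀ ≠ 0 := by
      simp only [ne_eq, ENNReal.ofReal_eq_zero, not_le]; linarith
    rw [eLpNorm_eq_lintegral_rpow_enorm_toReal hp0 ENNReal.ofReal_ne_top,
      ENNReal.toReal_ofReal hp₀pos.le]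
    refine ENNReal.rpow_lt_top_of_nonneg (by positivity) ?_
    have hle : ∫⁻ x, (‖f x‖₊ : ℝ≥0∞) ^ p₀ ∂(siegelMeasure n)
        ≤ ∫⁻ x, (‖f x‖₊ : ℝ≥0∞) ^ p₀ := by
      rw [siegelMeasure]
      exact lintegral_mono' Measure.restrict_le_self le_rfl
    refine ne_of_lt (lt_of_le_of_lt hle ?_)
    set M_up : ℝ → ℝ≥0∞ := fun y => ENNReal.ofReal (g y) ^ p₀ with hMup_def
    have hMupmeas : Measurable M_up :=
      (ENNReal.measurable_ofReal.comp hgmeas).pow measurable_const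
    have hpt : ∀ x : SiegelSpace n,
        (‖f x‖₊ : ℝ≥0∞) ^ p₀ = R.indicator (fun w => M_up w.2.im) x := by
      intro x
      by_cases hx : x ∈ R
      · rw [Set.indicator_of_mem hx, hf_def, Set.indicator_of_mem hx,
          ← enorm_eq_nnnorm, ← ofReal_norm, Complex.norm_real, Real.norm_eq_abs,
          abs_of_pos (hgpos _ hx.2.2)]
      · rw [Set.indicator_of_notMem hx, hf_def, Set.indicator_of_notMem hx]
        simp [ENNReal.zero_rpow_of_pos hp₀pos]
    simp only [hpt]
    rw [hR_def, master (n-1) (2*n) M_up hMupmeas]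
    have hbd : ∀ y ∈ Set.Ioi (2:ℝ),
        ENNReal.ofReal (2*y) * ((ENNReal.ofReal (y / ((2*n : ℕ):ℝ)) *
          (NNReal.pi : ℝ≥0∞)) ^ (n-1) * M_up y)
        ≤ ENNReal.ofReal (2 * Real.pi ^ (n-1)) *
            ENNReal.ofReal (Real.log y ^ (-p₀) * y⁻¹) := by
      intro y hy
      have hy2 : (2:ℝ) < y := hy
      have h0 : (0:ℝ) < y := by linarith
      have hlog : 0 < Real.log y := Real.log_pos (by linarith)
      have hNpos : (0:ℝ) < ((2*n : ℕ):ℝ) := by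
        have : 0 < 2*n := by omega
        exact_mod_cast this
      have hπ : (NNReal.pi : ℝ≥0∞) = ENNReal.ofReal Real.pi := by
        rw [← NNReal.coe_real_pi, ENNReal.ofReal_coe_nnreal]
      simp only [hMup_def]
      rw [hπ, ← ENNReal.ofReal_mul (by positivity : (0:ℝ) ≤ y / ((2*n : ℕ):ℝ)),
        ← ENNReal.ofReal_pow (by positivity),
        ENNReal.ofReal_rpow_of_pos (hgpos _ hy2),
        ← ENNReal.ofReal_mul (by positivity),
        ← ENNReal.ofReal_mul (by positivity : (0:ℝ) ≤ 2*y)]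
      have hdivle : y / ((2*n : ℕ):ℝ) ≤ y := by
        apply div_le_self h0.le
        have : (1:ℕ) ≤ 2*n := by omega
        exact_mod_cast this
      have hstep : (y / ((2*n : ℕ):ℝ) * Real.pi) ^ (n-1) ≤ (y * Real.pi) ^ (n-1) := by
        apply pow_le_pow_left₀ (by positivity)
        exact mul_le_mul_of_nonneg_right hdivle Real.pi_pos.le
      have hgy : g y ^ p₀ = y ^ (-((n:ℝ)+1)) * ((Real.log y) ^ p₀)⁻¹ := by
        simp only [hg_def]
        rw [Real.div_rpow (Real.rpow_nonneg h0.le _) hlog.le,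
          ← Real.rpow_mul h0.le]
        rw [show -s * p₀ = -((n:ℝ)+1) by rw [neg_mul, hsp₀]]
        rw [div_eq_mul_inv]
      rw [← ENNReal.ofReal_mul (by positivity : (0:ℝ) ≤ 2 * Real.pi ^ (n-1))]
      apply ENNReal.ofReal_le_ofReal
      have hyy : y * y^(n-1) = y^n := by rw [← pow_succ', Nat.sub_add_cancel hn]
      have hA : y * (y^(n-1) : ℝ) * y ^ (-((n:ℝ)+1)) = y⁻¹ := by
        rw [hyy, ← Real.rpow_natCast y n, ← Real.rpow_add h0,
          show (n:ℝ) + -((n:ℝ)+1) = -1 by ring, Real.rpow_neg_one]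
      calc 2*y*((y / ((2*n : ℕ):ℝ) * Real.pi)^(n-1) * g y ^ p₀)
          ≤ 2*y*((y*Real.pi)^(n-1) * g y ^ p₀) := by
            apply mul_le_mul_of_nonneg_left _ (by positivity)
            exact mul_le_mul_of_nonneg_right hstep (Real.rpow_nonneg (hgpos _ hy2).le _)
        _ = (y * y^(n-1) * y ^ (-((n:ℝ)+1))) *
              (2 * Real.pi^(n-1) * ((Real.log y)^p₀)⁻¹) := by
            rw [hgy, mul_pow]; ring
        _ = 2 * Real.pi^(n-1) * (Real.log y ^ (-p₀) * y⁻¹) := by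
            rw [hA, Real.rpow_neg hlog.le]; ring
    have hfin' : ∫⁻ y in Set.Ioi (2:ℝ),
        ENNReal.ofReal (Real.log y ^ (-p₀) * y⁻¹) < ⊤ := by
      have hI := (int_finite hp₀).2
      refine lt_of_le_of_lt (lintegral_mono fun y => ?_) hI
      rw [← ofReal_norm, Real.norm_eq_abs]
      exact ENNReal.ofReal_le_ofReal (le_abs_self _)
    calc ∫⁻ y in Set.Ioi (2:ℝ),
          ENNReal.ofReal (2*y) * ((ENNReal.ofReal (y / ((2*n : ℕ):ℝ)) *
            (NNReal.pi : ℝ≥0∞)) ^ (n-1) * M_up y)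
        ≤ ∫⁻ y in Set.Ioi (2:ℝ), ENNReal.ofReal (2 * Real.pi ^ (n-1)) *
            ENNReal.ofReal (Real.log y ^ (-p₀) * y⁻¹) := by
          refine setLIntegral_mono ?_ hbd
          exact measurable_const.mul
            ((Real.measurable_log.pow measurable_const).mul measurable_inv).ennreal_ofReal
      _ = ENNReal.ofReal (2 * Real.pi ^ (n-1)) * ∫⁻ y in Set.Ioi (2:ℝ),
            ENNReal.ofReal (Real.log y ^ (-p₀) * y⁻¹) := by
          rw [lintegral_const_mul _
            (show Measurable fun y : ℝ => ENNReal.ofReal (Real.log y ^ (-p₀) * y⁻¹) from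
            ((Real.measurable_log.pow measurable_const).mul measurable_inv).ennreal_ofReal)]
      _ < ⊤ := ENNReal.mul_lt_top ENNReal.ofReal_lt_top hfin'
  obtain ⟨h1, _⟩ := hbound f hmem
  obtain ⟨h1, _⟩ := hbound f hmem
  have hdiv : ∀ z ∈ siegelDomain n,
      ¬ IntegrableOn (fun w => f w / siegelRho n z w ^ (α:ℂ)) (siegelDomain n) := by
    intro z hz hInt
    have hfin : ∫⁻ w in siegelDomain n, (‖f w / siegelRho n z w ^ (α:ℂ)‖₊ : ℝ≥0∞) < ⊤ :=
      hInt.2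
    set Cz : ℝ := 1 + ‖z.2‖ + ∑ k, ‖z.1 k‖ with hCz_def
    have hsum_nonneg : 0 ≤ ∑ k, ‖z.1 k‖ :=
      Finset.sum_nonneg fun k _ => norm_nonneg _
    have hCz : 0 < Cz := by
      rw [hCz_def]
      have h2 : 0 ≤ ‖z.2‖ := norm_nonneg _
      linarith
    have hNpos : (0:ℝ) < ((2*n : ℕ):ℝ) := by
      have : 0 < 2*n := by omega
      exact_mod_cast this
    have hsqrt_le : ∀ y : ℝ, 2 < y → Real.sqrt (y / ((2*n : ℕ):ℝ)) ≤ y := by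
      intro y hy
      have h0 : (0:ℝ) < y := by linarith
      have hN1 : (1:ℝ) ≤ ((2*n : ℕ):ℝ) := by
        have : (1:ℕ) ≤ 2*n := by omega
        exact_mod_cast this
      have h1 : Real.sqrt (y / ((2*n : ℕ):ℝ)) ≤ Real.sqrt y :=
        Real.sqrt_le_sqrt (div_le_self h0.le hN1)
      have h2 : Real.sqrt y ≤ y := by
        have h3 := Real.sqrt_le_sqrt (show y ≤ y^2 by nlinarith)
        rwa [Real.sqrt_sq h0.le] at h3
      linarith
    have hrho_le : ∀ w ∈ R, ‖siegelRho n z w‖ ≤ Cz * w.2.im := by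
      intro w hw
      obtain ⟨hw1, hw2, hw3⟩ := hw
      have hy : (0:ℝ) < w.2.im := by linarith
      have hb1 : ‖Complex.I / 2 * ((starRingEnd ℂ) w.2 - z.2)‖
          ≤ w.2.im + ‖z.2‖ / 2 := by
        rw [norm_mul, norm_div, Complex.norm_I]
        have h2 : ‖(2:ℂ)‖ = 2 := by norm_num
        rw [h2]
        have h3 : ‖(starRingEnd ℂ) w.2 - z.2‖ ≤ ‖w.2‖ + ‖z.2‖ := by
          refine (norm_sub_le _ _).trans ?_
          rw [RCLike.norm_conj]
        have h4 : ‖w.2‖ ≤ 2 * w.2.im := by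
          refine (Complex.norm_le_abs_re_add_abs_im _).trans ?_
          rw [abs_of_pos hy]
          linarith
        have h5 : ‖z.2‖ = ‖z.2‖ := rfl
        rw [h5] at h3
        calc 1 / 2 * ‖(starRingEnd ℂ) w.2 - z.2‖
            ≤ 1 / 2 * (2 * w.2.im + ‖z.2‖) := by
              apply mul_le_mul_of_nonneg_left _ (by norm_num)
              linarith
          _ = w.2.im + ‖z.2‖ / 2 := by ring
      have hb2 : ‖∑ k, z.1 k * (starRingEnd ℂ) (w.1 k)‖
          ≤ (∑ k, ‖z.1 k‖) * w.2.im := by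
        refine (norm_sum_le _ _).trans ?_
        rw [Finset.sum_mul]
        refine Finset.sum_le_sum fun k _ => ?_
        rw [norm_mul, RCLike.norm_conj]
        refine mul_le_mul_of_nonneg_left ?_ (norm_nonneg _)
        exact ((hw1 k).le.trans (hsqrt_le _ hw3))
      have htri : ‖siegelRho n z w‖
          ≤ ‖Complex.I / 2 * ((starRingEnd ℂ) w.2 - z.2)‖
            + ‖∑ k, z.1 k * (starRingEnd ℂ) (w.1 k)‖ := by
        simp only [siegelRho]
        exact norm_sub_le _ _
      have habs2 : 0 ≤ ‖z.2‖ := norm_nonneg _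
      have hexp : Cz * w.2.im
          = w.2.im + ‖z.2‖ * w.2.im + (∑ k, ‖z.1 k‖) * w.2.im := by
        rw [hCz_def]; ring
      have : ‖z.2‖ / 2 ≤ ‖z.2‖ * w.2.im := by nlinarith
      calc ‖siegelRho n z w‖
          ≤ (w.2.im + ‖z.2‖ / 2)
            + (∑ k, ‖z.1 k‖) * w.2.im := by
            refine htri.trans ?_
            exact add_le_add hb1 hb2
        _ ≤ Cz * w.2.im := by rw [hexp]; linarith
    have hrho_ne : ∀ w ∈ R, siegelRho n z w ≠ 0 := by
      intro w hw h0
      have hwU := hRsubU hw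
      have hz' : ∑ k, ‖z.1 k‖ ^ 2 < z.2.im := hz
      have hw' : ∑ k, ‖w.1 k‖ ^ 2 < w.2.im := hwU
      have e1 : (Complex.I / 2 * ((starRingEnd ℂ) w.2 - z.2)).re
          = (w.2.im + z.2.im) / 2 := by
        simp [Complex.mul_re, Complex.div_re, Complex.normSq_apply]
        ring
      have hsum_re : (∑ k, z.1 k * (starRingEnd ℂ) (w.1 k)).re
          ≤ ((∑ k, ‖z.1 k‖ ^ 2) + ∑ k, ‖w.1 k‖ ^ 2) / 2 := by
        rw [Complex.re_sum]
        have hterm : ∀ k, (z.1 k * (starRingEnd ℂ) (w.1 k)).re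
            ≤ (‖z.1 k‖ ^ 2 + ‖w.1 k‖ ^ 2) / 2 := by
          intro k
          have h1 : (z.1 k * (starRingEnd ℂ) (w.1 k)).re
              ≤ ‖z.1 k * (starRingEnd ℂ) (w.1 k)‖ := Complex.re_le_norm _
          rw [norm_mul, Complex.norm_conj] at h1
          nlinarith [sq_nonneg (‖z.1 k‖ - ‖w.1 k‖),
            norm_nonneg (z.1 k), norm_nonneg (w.1 k)]
        calc ∑ k, (z.1 k * (starRingEnd ℂ) (w.1 k)).re
            ≤ ∑ k, (‖z.1 k‖ ^ 2 + ‖w.1 k‖ ^ 2) / 2 :=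
              Finset.sum_le_sum fun k _ => hterm k
          _ = ((∑ k, ‖z.1 k‖ ^ 2) + ∑ k, ‖w.1 k‖ ^ 2) / 2 := by
              rw [← Finset.sum_div, Finset.sum_add_distrib]
      have hre : 0 < (siegelRho n z w).re := by
        have hre_eq : (siegelRho n z w).re
            = (Complex.I / 2 * ((starRingEnd ℂ) w.2 - z.2)).re
              - (∑ k, z.1 k * (starRingEnd ℂ) (w.1 k)).re := by
          simp only [siegelRho, Complex.sub_re]
        rw [hre_eq, e1]
        linarith
      rw [h0] at hre
      simp at hre
    have hrho_meas : Measurable fun w : SiegelSpace n => siegelRho n z w := by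
      have hc : Continuous fun w : SiegelSpace n => siegelRho n z w := by
        simp only [siegelRho, starRingEnd_apply]
        refine Continuous.sub ?_ ?_
        · exact continuous_const.mul ((continuous_star.comp continuous_snd).sub
            continuous_const)
        · exact continuous_finset_sum _ fun k _ => continuous_const.mul
            (continuous_star.comp ((continuous_apply k).comp continuous_fst))
      exact hc.measurable
    have hmeasnn : Measurable fun w : SiegelSpace n =>
        (‖f w / siegelRho n z w ^ (α:ℂ)‖₊ : ℝ≥0∞) :=
      ((hfmeas.div (hrho_meas.pow measurable_const)).nnnorm).coe_nnreal_ennreal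
    set M_lo : ℝ → ℝ≥0∞ := fun y => ENNReal.ofReal (g y * (Cz * y) ^ (-α)) with hMlo_def
    have hMlo_meas : Measurable M_lo :=
      (hgmeas.mul ((measurable_const.mul measurable_id).pow measurable_const)).ennreal_ofReal
    have hptlo : ∀ w ∈ R, M_lo w.2.im ≤ (‖f w / siegelRho n z w ^ (α:ℂ)‖₊ : ℝ≥0∞) := by
      intro w hw
      have hw3 : 2 < w.2.im := hw.2.2
      have hy : (0:ℝ) < w.2.im := by linarith
      have hρne := hrho_ne w hw
      have hρpos : 0 < ‖siegelRho n z w‖ := norm_pos_iff.mpr hρne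
      have hfw : f w = ((g w.2.im : ℝ) : ℂ) := Set.indicator_of_mem hw _
      rw [← enorm_eq_nnnorm, ← ofReal_norm, hfw, norm_div, Complex.norm_real, Real.norm_eq_abs,
        abs_of_pos (hgpos _ hw3), Complex.norm_cpow_real]
      simp only [hMlo_def]
      apply ENNReal.ofReal_le_ofReal
      have h1 : ‖siegelRho n z w‖ ^ α ≤ (Cz * w.2.im) ^ α :=
        Real.rpow_le_rpow (norm_nonneg _) (hrho_le w hw) hα0.le
      have h2 : 0 < ‖siegelRho n z w‖ ^ α := Real.rpow_pos_of_pos hρpos α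
      rw [Real.rpow_neg (by positivity), div_eq_mul_inv]
      exact mul_le_mul_of_nonneg_left (inv_anti₀ h2 h1) (hgpos _ hw3).le
    have hdiv2 : ∫⁻ w : SiegelSpace n, R.indicator (fun w => M_lo w.2.im) w = ⊤ := by
      rw [hR_def, master (n-1) (2*n) M_lo hMlo_meas]
      set c2 : ℝ := 2 * ((((2*n : ℕ):ℝ))⁻¹) ^ (n-1) * Cz ^ (-α) with hc2_def
      have hc2 : 0 < c2 := by
        rw [hc2_def]
        have h := Real.rpow_pos_of_pos hCz (-α)
        positivity
      have hπge1 : (1:ℝ≥0∞) ≤ (NNReal.pi : ℝ≥0∞) := by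
        have hπ : (NNReal.pi : ℝ≥0∞) = ENNReal.ofReal Real.pi := by
          rw [← NNReal.coe_real_pi, ENNReal.ofReal_coe_nnreal]
        rw [hπ, ← ENNReal.ofReal_one]
        exact ENNReal.ofReal_le_ofReal (by linarith [Real.pi_gt_three])
      have hlow : ∀ y ∈ Set.Ioi (2:ℝ), ENNReal.ofReal (c2 * (y * Real.log y)⁻¹)
          ≤ ENNReal.ofReal (2*y) * ((ENNReal.ofReal (y / ((2*n : ℕ):ℝ)) *
            (NNReal.pi : ℝ≥0∞)) ^ (n-1) * M_lo y) := by
        intro y hy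
        have hy2 : (2:ℝ) < y := hy
        have h0 : (0:ℝ) < y := by linarith
        have hlog : 0 < Real.log y := Real.log_pos (by linarith)
        have hyy : y * y^(n-1) = y^n := by rw [← pow_succ', Nat.sub_add_cancel hn]
        have hA : y * (y^(n-1) : ℝ) * y ^ (-((n:ℝ)+1)) = y⁻¹ := by
          rw [hyy, ← Real.rpow_natCast y n, ← Real.rpow_add h0,
            show (n:ℝ) + -((n:ℝ)+1) = -1 by ring, Real.rpow_neg_one]
        have hreal : c2 * (y * Real.log y)⁻¹
            = 2*y * ((y / ((2*n : ℕ):ℝ))^(n-1) * (g y * (Cz*y) ^ (-α))) := by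
          simp only [hg_def]
          rw [Real.mul_rpow hCz.le h0.le, div_pow, div_eq_mul_inv (y^(n-1)), ← inv_pow]
          rw [show y ^ (-s) / Real.log y * (Cz ^ (-α) * y ^ (-α))
              = (y ^ (-s) * y ^ (-α)) * Cz ^ (-α) * (Real.log y)⁻¹ by
            rw [div_eq_mul_inv]; ring]
          rw [← Real.rpow_add h0, show -s + -α = -((n:ℝ)+1) by rw [hs_def]; ring]
          rw [hc2_def, mul_inv]
          calc 2 * (((2*n : ℕ):ℝ))⁻¹ ^ (n-1) * Cz ^ (-α) * (y⁻¹ * (Real.log y)⁻¹)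
              = (y * y^(n-1) * y ^ (-((n:ℝ)+1))) *
                  (2 * (((2*n : ℕ):ℝ))⁻¹ ^ (n-1) * Cz ^ (-α) * (Real.log y)⁻¹) := by
                rw [hA]; ring
            _ = 2*y * (y^(n-1) * (((2*n : ℕ):ℝ))⁻¹ ^ (n-1) *
                  (y ^ (-((n:ℝ)+1)) * Cz ^ (-α) * (Real.log y)⁻¹)) := by ring
        rw [hreal, ENNReal.ofReal_mul (by positivity : (0:ℝ) ≤ 2*y)]
        simp only [hMlo_def]
        rw [ENNReal.ofReal_mul (by positivity : (0:ℝ) ≤ (y / ((2*n : ℕ):ℝ))^(n-1))]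
        refine mul_le_mul_right (mul_le_mul_left ?_ _) _
        calc ENNReal.ofReal ((y / ((2*n : ℕ):ℝ))^(n-1))
            = (ENNReal.ofReal (y / ((2*n : ℕ):ℝ)))^(n-1) :=
              ENNReal.ofReal_pow (by positivity) _
          _ ≤ (ENNReal.ofReal (y / ((2*n : ℕ):ℝ)) * (NNReal.pi : ℝ≥0∞))^(n-1) :=
              pow_le_pow_left' (le_mul_of_one_le_right' hπge1) _
      have hlhs : ∫⁻ y in Set.Ioi (2:ℝ), ENNReal.ofReal (c2 * (y * Real.log y)⁻¹) = ⊤ := by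
        have hsplit : ∀ y : ℝ, ENNReal.ofReal (c2 * (y * Real.log y)⁻¹)
            = ENNReal.ofReal c2 * ENNReal.ofReal ((y * Real.log y)⁻¹) :=
          fun y => ENNReal.ofReal_mul hc2.le
        simp only [hsplit]
        rw [lintegral_const_mul _
          (show Measurable fun y : ℝ => ENNReal.ofReal ((y * Real.log y)⁻¹) from
            ((measurable_id.mul Real.measurable_log).inv).ennreal_ofReal),
          int_infinite]
        rw [ENNReal.mul_top]
        simp only [ne_eq, ENNReal.ofReal_eq_zero, not_le]
        linarith
      refine top_unique ?_
      calc (⊤:ℝ≥0∞) = ∫⁻ y in Set.Ioi (2:ℝ), ENNReal.ofReal (c2 * (y * Real.log y)⁻¹) :=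
            hlhs.symm
        _ ≤ ∫⁻ y in Set.Ioi (2:ℝ),
              ENNReal.ofReal (2*y) * ((ENNReal.ofReal (y / ((2*n : ℕ):ℝ)) *
                (NNReal.pi : ℝ≥0∞)) ^ (n-1) * M_lo y) := by
            refine setLIntegral_mono ?_ hlow
            exact ((measurable_const.mul measurable_id).ennreal_ofReal).mul
              ((((measurable_id.div_const _).ennreal_ofReal.mul_const _).pow_const _).mul
                hMlo_meas)
    have hchain : (⊤:ℝ≥0∞) ≤ ∫⁻ w in siegelDomain n,
        (‖f w / siegelRho n z w ^ (α:ℂ)‖₊ : ℝ≥0∞) := by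
      calc (⊤:ℝ≥0∞) = ∫⁻ w : SiegelSpace n, R.indicator (fun w => M_lo w.2.im) w :=
            hdiv2.symm
        _ = ∫⁻ w in R, M_lo w.2.im := lintegral_indicator hRmeas _
        _ ≤ ∫⁻ w in R, (‖f w / siegelRho n z w ^ (α:ℂ)‖₊ : ℝ≥0∞) :=
            setLIntegral_mono hmeasnn hptlo
        _ ≤ ∫⁻ w in siegelDomain n, (‖f w / siegelRho n z w ^ (α:ℂ)‖₊ : ℝ≥0∞) :=
            lintegral_mono_set hRsubU
    exact absurd hfin (not_lt.mpr hchain)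
  have hUopen : IsOpen (siegelDomain n) := by
    have heq : siegelDomain n
        = {z : SiegelSpace n | (∑ k, ‖z.1 k‖ ^ 2) < z.2.im} := rfl
    rw [heq]
    refine isOpen_lt ?_ (Complex.continuous_im.comp continuous_snd)
    exact continuous_finset_sum Finset.univ fun k _ =>
      (continuous_norm.comp ((continuous_apply k).comp continuous_fst)).pow 2
  have hUpos : 0 < volume (siegelDomain n) := by
    refine hUopen.measure_pos volume ⟨(0, Complex.I), ?_⟩
    show (∑ k, ‖(0 : Fin (n-1) → ℂ) k‖ ^ 2) < Complex.I.im
    simp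
  have hfalse : ∀ᵐ z ∂(siegelMeasure n), False := by
    have hmemU : ∀ᵐ z ∂(siegelMeasure n), z ∈ siegelDomain n := by
      rw [siegelMeasure]
      exact ae_restrict_mem hUopen.measurableSet
    filter_upwards [h1, hmemU] with z hz hzU
    exact hdiv z hzU hz
  have hzero : siegelMeasure n Set.univ = 0 := by
    rw [ae_iff] at hfalse
    simpa using hfalse
  rw [siegelMeasure, Measure.restrict_apply_univ] at hzero
  exact absurd hzero (ne_of_gt hUpos)
end
end
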